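/- arXiv:1002.0170 — 6 statements merged into one kernel-verified Lean document; each statement's English description precedes it below -/
import Mathlib

section
/- Let k ≥ 2 be an integer and let 0 < r < 1/(2k). Let X_2, …, X_k be k−1 i.i.d. uniform random points on the circle 𝕋¹ = ℝ/ℤ, and let 0 denote the zero element of 𝕋¹. Then the probability that dist(0, X_2) ≤ r, dist(X_j, X_{j+1}) ≤ r for all j = 2, …, k−1, and dist(X_k, 0) ≤ r equals r^{k−1} · Vol(H_{k−1}(1)). -/
open MeasureTheory ProbabilityTheory

/-- The polytope `H_{m+1}(r) ⊆ ℝ^{m+1}`: all `(x_1, …, x_{m+1})` with `|x_1| ≤ r`,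
`|x_{j+1} − x_j| ≤ r` for `j = 1, …, m`, and `|x_{m+1}| ≤ r`. -/
def Hpoly (m : ℕ) (r : ℝ) : Set (Fin (m + 1) → ℝ) :=
  {x | |x 0| ≤ r ∧ (∀ j : Fin m, |x j.succ - x j.castSucc| ≤ r) ∧ |x (Fin.last m)| ≤ r}

section Aux

open Set Pointwise

/-- The norm on the unit circle is at most the absolute value of any representative. -/
lemma norm_circle_le_abs (t : ℝ) : ‖(t : AddCircle (1 : ℝ))‖ ≤ |t| := by
  rw [AddCircle.norm_eq]
  simpa using round_le t 0

/-- If `|t| < 1 - r` and the circle norm of `t` is at most `r`, then `|t| ≤ r`. -/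
lemma abs_le_of_norm_circle_le {t r : ℝ} (hr : 0 < r) (ht : |t| < 1 - r)
    (h : ‖(t : AddCircle (1 : ℝ))‖ ≤ r) : |t| ≤ r := by
  rw [AddCircle.norm_eq] at h
  simp only [inv_one, one_mul, mul_one] at h
  rcases eq_or_ne (round t) 0 with h0 | h0
  · simpa [h0] using h
  · exfalso
    have h1 : (1 : ℝ) ≤ |(round t : ℝ)| := by
      have := Int.one_le_abs h0
      exact_mod_cast this
    have h2 : |(round t : ℝ)| ≤ |t - round t| + |t| := by
      calc |(round t : ℝ)| = |-(t - (round t : ℝ)) + t| := by ring_nf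
        _ ≤ |-(t - (round t : ℝ))| + |t| := abs_add_le _ _
        _ = |t - round t| + |t| := by rw [abs_neg]
    linarith

/-- Product of restricted measures is the restriction of the product measure. -/
lemma pi_restrict_eq {ι : Type*} [Fintype ι] {α : ι → Type*} [∀ i, MeasurableSpace (α i)]
    (μ : ∀ i, Measure (α i)) [∀ i, SigmaFinite (μ i)] (s : ∀ i, Set (α i))
    (hs : ∀ i, MeasurableSet (s i)) :
    Measure.pi (fun i => (μ i).restrict (s i)) = (Measure.pi μ).restrict (univ.pi s) := by
  refine Measure.pi_eq fun t ht => ?_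
  rw [Measure.restrict_apply (MeasurableSet.univ_pi ht), ← Set.pi_inter_distrib, Measure.pi_pi]
  exact Finset.prod_congr rfl fun i _ => (Measure.restrict_apply (ht i)).symm

/-- Scaling the polytope. -/
lemma Hpoly_smul (m : ℕ) {r : ℝ} (hr : 0 < r) : Hpoly m r = r • Hpoly m 1 := by
  ext x
  constructor
  · rintro ⟨h1, h2, h3⟩
    refine ⟨r⁻¹ • x, ⟨?_, fun j => ?_, ?_⟩, ?_⟩
    · simp only [Pi.smul_apply, smul_eq_mul, abs_mul, abs_inv, abs_of_pos hr]
      rw [inv_mul_le_iff₀ hr, mul_one]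
      exact h1
    · simp only [Pi.smul_apply, smul_eq_mul, ← mul_sub, abs_mul, abs_inv, abs_of_pos hr]
      rw [inv_mul_le_iff₀ hr, mul_one]
      exact h2 j
    · simp only [Pi.smul_apply, smul_eq_mul, abs_mul, abs_inv, abs_of_pos hr]
      rw [inv_mul_le_iff₀ hr, mul_one]
      exact h3
    · ext i
      simp [smul_smul, mul_inv_cancel₀ hr.ne', Pi.smul_apply]
      field_simp
  · rintro ⟨y, ⟨h1, h2, h3⟩, rfl⟩
    refine ⟨?_, fun j => ?_, ?_⟩
    · simp only [Pi.smul_apply, smul_eq_mul, abs_mul, abs_of_pos hr]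
      nlinarith [abs_nonneg (y 0)]
    · simp only [Pi.smul_apply, smul_eq_mul, ← mul_sub, abs_mul, abs_of_pos hr]
      nlinarith [abs_nonneg (y j.succ - y j.castSucc), h2 j]
    · simp only [Pi.smul_apply, smul_eq_mul, abs_mul, abs_of_pos hr]
      nlinarith [abs_nonneg (y (Fin.last m))]

/-- The key set identity: the preimage of the chain event in the box equals `Hpoly m r`. -/
lemma preimage_chain_inter_box (m : ℕ) {r : ℝ} (hr : 0 < r) (h2 : ((m : ℝ) + 2) * r < 1 / 2) :
    ((fun (x : Fin (m + 1) → ℝ) (i : Fin (m + 1)) => ((x i : ℝ) : AddCircle (1 : ℝ))) ⁻¹'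
        {y : Fin (m + 1) → AddCircle (1 : ℝ) | dist (0 : AddCircle (1 : ℝ)) (y 0) ≤ r ∧
          (∀ j : Fin m, dist (y j.castSucc) (y j.succ) ≤ r) ∧
          dist (y (Fin.last m)) (0 : AddCircle (1 : ℝ)) ≤ r})
      ∩ univ.pi (fun _ => Ioc (-(2⁻¹) : ℝ) (-(2⁻¹) + 1)) = Hpoly m r := by
  have hm0 : (0 : ℝ) ≤ (m : ℝ) := Nat.cast_nonneg m
  have hr2 : r < 1 / 2 := by nlinarith
  have hmr : ((m : ℝ) + 1) * r < 1 / 2 := by nlinarith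
  have hdist : ∀ a b : ℝ, dist ((a : ℝ) : AddCircle (1 : ℝ)) ((b : ℝ) : AddCircle (1 : ℝ)) =
      ‖((a - b : ℝ) : AddCircle (1 : ℝ))‖ := fun a b => by
    rw [dist_eq_norm, QuotientAddGroup.mk_sub]
  ext x
  simp only [mem_inter_iff, mem_preimage, mem_setOf_eq, mem_univ_pi, mem_Ioc, Hpoly]
  constructor
  · rintro ⟨⟨h0, hmid, hlast⟩, hbox⟩
    have hb : ∀ i, |x i| ≤ 2⁻¹ := fun i => by
      rw [abs_le]
      exact ⟨by linarith [(hbox i).1], by linarith [(hbox i).2]⟩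
    have h0' : |x 0| ≤ r := by
      apply abs_le_of_norm_circle_le hr (lt_of_le_of_lt (hb 0) (by norm_num; linarith))
      rwa [dist_zero_left] at h0
    have claim : ∀ j : Fin (m + 1), |x j| ≤ ((j : ℝ) + 1) * r := by
      intro j
      induction j using Fin.induction with
      | zero => simpa using h0'
      | succ j ih =>
        have hjc : ((j.castSucc : ℕ) : ℝ) + 1 ≤ (m : ℝ) + 1 := by
          have := j.2
          rw [Fin.coe_castSucc]
          exact_mod_cast Nat.add_le_add_right (Nat.le_of_lt this) 1
        have hd : |x j.succ - x j.castSucc| ≤ r := by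
          apply abs_le_of_norm_circle_le hr
          · calc |x j.succ - x j.castSucc| ≤ |x j.succ| + |x j.castSucc| := abs_sub _ _
              _ ≤ 2⁻¹ + (((j.castSucc : ℕ) : ℝ) + 1) * r := add_le_add (hb _) ih
              _ ≤ 2⁻¹ + ((m : ℝ) + 1) * r := by nlinarith
              _ < 1 - r := by nlinarith
          · have := hmid j
            rwa [dist_comm, hdist] at this
        have hstep : |x j.succ| ≤ |x j.castSucc| + r := by
          calc |x j.succ| = |(x j.succ - x j.castSucc) + x j.castSucc| := by ring_nf
            _ ≤ |x j.succ - x j.castSucc| + |x j.castSucc| := abs_add_le _ _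
            _ ≤ |x j.castSucc| + r := by linarith
        have h3 : ((j.succ : ℕ) : ℝ) = ((j.castSucc : ℕ) : ℝ) + 1 := by
          rw [Fin.val_succ, Fin.coe_castSucc]
          push_cast
          ring
        rw [h3]
        linarith
    have hdiff : ∀ j : Fin m, |x j.succ - x j.castSucc| ≤ r := by
      intro j
      have hjc : ((j.castSucc : ℕ) : ℝ) + 1 ≤ (m : ℝ) + 1 := by
        have := j.2
        rw [Fin.coe_castSucc]
        exact_mod_cast Nat.add_le_add_right (Nat.le_of_lt this) 1
      apply abs_le_of_norm_circle_le hr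
      · calc |x j.succ - x j.castSucc| ≤ |x j.succ| + |x j.castSucc| := abs_sub _ _
          _ ≤ 2⁻¹ + (((j.castSucc : ℕ) : ℝ) + 1) * r := add_le_add (hb _) (claim _)
          _ ≤ 2⁻¹ + ((m : ℝ) + 1) * r := by nlinarith
          _ < 1 - r := by nlinarith
      · have := hmid j
        rwa [dist_comm, hdist] at this
    refine ⟨h0', hdiff, ?_⟩
    apply abs_le_of_norm_circle_le hr (lt_of_le_of_lt (hb _) (by norm_num; linarith))
    rwa [dist_zero_right] at hlast
  · rintro ⟨h0, hmid, hlast⟩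
    have claim : ∀ j : Fin (m + 1), |x j| ≤ ((j : ℝ) + 1) * r := by
      intro j
      induction j using Fin.induction with
      | zero => simpa using h0
      | succ j ih =>
        have hstep : |x j.succ| ≤ |x j.castSucc| + r := by
          calc |x j.succ| = |(x j.succ - x j.castSucc) + x j.castSucc| := by ring_nf
            _ ≤ |x j.succ - x j.castSucc| + |x j.castSucc| := abs_add_le _ _
            _ ≤ |x j.castSucc| + r := by linarith [hmid j]
        have h3 : ((j.succ : ℕ) : ℝ) = ((j.castSucc : ℕ) : ℝ) + 1 := by
          rw [Fin.val_succ, Fin.coe_castSucc]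
          push_cast
          ring
        rw [h3]
        linarith
    have hbound : ∀ j : Fin (m + 1), |x j| ≤ ((m : ℝ) + 1) * r := by
      intro j
      refine (claim j).trans ?_
      have hj : ((j : ℕ) : ℝ) ≤ (m : ℝ) := by
        exact_mod_cast Nat.lt_succ_iff.mp j.2
      nlinarith
    refine ⟨⟨?_, fun j => ?_, ?_⟩, fun i => ⟨?_, ?_⟩⟩
    · rw [dist_zero_left]
      exact (norm_circle_le_abs _).trans h0
    · rw [dist_comm, hdist]
      refine (norm_circle_le_abs _).trans ?_
      exact hmid j
    · rw [dist_zero_right]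
      exact (norm_circle_le_abs _).trans hlast
    · have := (abs_le.mp (hbound i)).1
      nlinarith
    · have := (abs_le.mp (hbound i)).2
      nlinarith

end Aux

/-- Let `k = m + 2 ≥ 2` and `0 < r < 1/(2k)`.  If `X_2, …, X_k` (here indexed by
`Fin (m + 1)`) are i.i.d. uniform points on the circle `𝕋¹ = ℝ/ℤ = AddCircle 1`,
then the probability that `dist(0, X_2) ≤ r`, `dist(X_j, X_{j+1}) ≤ r` for all
`j = 2, …, k − 1`, and `dist(X_k, 0) ≤ r` equals `r^(k-1) · Vol(H_{k-1}(1))`. -/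
theorem prob_chain_eq_volume_Hpoly (m : ℕ) (r : ℝ) (hr : 0 < r)
    (hr' : r < 1 / (2 * (m + 2)))
    {Ω : Type*} [MeasurableSpace Ω] (P : Measure Ω) [IsProbabilityMeasure P]
    (X : Fin (m + 1) → Ω → AddCircle (1 : ℝ))
    (hmeas : ∀ i, Measurable (X i))
    (hindep : iIndepFun X P)
    (hunif : ∀ i, P.map (X i) = (volume : Measure (AddCircle (1 : ℝ)))) :
    P {ω | dist (0 : AddCircle (1 : ℝ)) (X 0 ω) ≤ r ∧
        (∀ j : Fin m, dist (X j.castSucc ω) (X j.succ ω) ≤ r) ∧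
        dist (X (Fin.last m) ω) (0 : AddCircle (1 : ℝ)) ≤ r}
      = ENNReal.ofReal (r ^ (m + 1)) * volume (Hpoly m 1) := by
  classical
  -- the chain event as a set in the product of circles
  set S : Set (Fin (m + 1) → AddCircle (1 : ℝ)) :=
    {y | dist (0 : AddCircle (1 : ℝ)) (y 0) ≤ r ∧ (∀ j : Fin m, dist (y j.castSucc) (y j.succ) ≤ r) ∧
      dist (y (Fin.last m)) (0 : AddCircle (1 : ℝ)) ≤ r} with hS_def
  have hS : MeasurableSet S := by
    have h1 : IsClosed {y : Fin (m + 1) → AddCircle (1 : ℝ) | dist (0 : AddCircle (1 : ℝ)) (y 0) ≤ r} :=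
      isClosed_le (continuous_const.dist (continuous_apply 0)) continuous_const
    have h2 : ∀ j : Fin m, IsClosed {y : Fin (m + 1) → AddCircle (1 : ℝ) | dist (y j.castSucc) (y j.succ) ≤ r} :=
      fun j => isClosed_le ((continuous_apply _).dist (continuous_apply _)) continuous_const
    have h3 : IsClosed {y : Fin (m + 1) → AddCircle (1 : ℝ) | dist (y (Fin.last m)) (0 : AddCircle (1 : ℝ)) ≤ r} :=
      isClosed_le ((continuous_apply _).dist continuous_const) continuous_const
    have : S = {y : Fin (m + 1) → AddCircle (1 : ℝ) | dist (0 : AddCircle (1 : ℝ)) (y 0) ≤ r} ∩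
        ((⋂ j : Fin m, {y : Fin (m + 1) → AddCircle (1 : ℝ) | dist (y j.castSucc) (y j.succ) ≤ r}) ∩
          {y : Fin (m + 1) → AddCircle (1 : ℝ) | dist (y (Fin.last m)) (0 : AddCircle (1 : ℝ)) ≤ r}) := by
      ext y
      simp [hS_def, Set.mem_iInter]
    rw [this]
    exact (h1.measurableSet).inter
      (((isClosed_iInter h2).measurableSet).inter h3.measurableSet)
  -- joint measurability
  have hT : Measurable (fun ω (i : Fin (m + 1)) => X i ω) :=
    measurable_pi_lambda _ fun i => hmeas i
  -- the joint law is the product of uniform laws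
  have hmap : P.map (fun ω (i : Fin (m + 1)) => X i ω)
      = Measure.pi (fun _ : Fin (m + 1) => (volume : Measure (AddCircle (1 : ℝ)))) := by
    refine (Measure.pi_eq fun s hs => ?_).symm
    rw [Measure.map_apply hT (MeasurableSet.univ_pi hs)]
    have hpre : (fun ω (i : Fin (m + 1)) => X i ω) ⁻¹' Set.univ.pi s
        = ⋂ i ∈ Finset.univ, X i ⁻¹' s i := by
      ext ω
      simp [Set.mem_univ_pi]
    rw [hpre, hindep.measure_inter_preimage_eq_mul Finset.univ (fun i _ => hs i)]
    refine Finset.prod_congr rfl fun i _ => ?_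
    rw [← Measure.map_apply (hmeas i) (hs i), hunif i]
  -- the event is the preimage of `S`
  have hev : {ω | dist (0 : AddCircle (1 : ℝ)) (X 0 ω) ≤ r ∧
      (∀ j : Fin m, dist (X j.castSucc ω) (X j.succ ω) ≤ r) ∧
      dist (X (Fin.last m) ω) (0 : AddCircle (1 : ℝ)) ≤ r} = (fun ω (i : Fin (m + 1)) => X i ω) ⁻¹' S := rfl
  rw [hev, ← Measure.map_apply hT hS, hmap]
  -- transfer to ℝ^{m+1} via the covering map
  haveI : Fact ((0 : ℝ) < 1) := ⟨zero_lt_one⟩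
  have hmp : MeasurePreserving (fun (x : Fin (m + 1) → ℝ) (i : Fin (m + 1)) => ((x i : ℝ) : AddCircle (1 : ℝ)))
      (Measure.pi fun _ => volume.restrict (Set.Ioc (-(2⁻¹) : ℝ) (-(2⁻¹) + 1)))
      (Measure.pi fun _ => (volume : Measure (AddCircle (1 : ℝ)))) :=
    measurePreserving_pi _ _ fun _ => AddCircle.measurePreserving_mk 1 (-(2⁻¹))
  have h2 : ((m : ℝ) + 2) * r < 1 / 2 := by
    have hpos : (0 : ℝ) < 2 * ((m : ℝ) + 2) := by positivity
    rw [lt_div_iff₀ hpos] at hr'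
    nlinarith
  calc (Measure.pi fun _ : Fin (m + 1) => (volume : Measure (AddCircle (1 : ℝ)))) S
      = (Measure.pi fun _ : Fin (m + 1) => volume.restrict (Set.Ioc (-(2⁻¹) : ℝ) (-(2⁻¹) + 1)))
        ((fun (x : Fin (m + 1) → ℝ) (i : Fin (m + 1)) => ((x i : ℝ) : AddCircle (1 : ℝ))) ⁻¹' S) :=
        (hmp.measure_preimage hS.nullMeasurableSet).symm
    _ = ((Measure.pi fun _ : Fin (m + 1) => (volume : Measure ℝ)).restrict
          (Set.univ.pi fun _ => Set.Ioc (-(2⁻¹) : ℝ) (-(2⁻¹) + 1)))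
        ((fun (x : Fin (m + 1) → ℝ) (i : Fin (m + 1)) => ((x i : ℝ) : AddCircle (1 : ℝ))) ⁻¹' S) := by
        rw [pi_restrict_eq _ _ (fun _ => measurableSet_Ioc)]
    _ = (Measure.pi fun _ : Fin (m + 1) => (volume : Measure ℝ))
        (((fun (x : Fin (m + 1) → ℝ) (i : Fin (m + 1)) => ((x i : ℝ) : AddCircle (1 : ℝ))) ⁻¹' S)
          ∩ Set.univ.pi fun _ => Set.Ioc (-(2⁻¹) : ℝ) (-(2⁻¹) + 1)) :=
        Measure.restrict_apply (hS.preimage hmp.measurable)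
    _ = volume (Hpoly m r) := by
        rw [← MeasureTheory.volume_pi, preimage_chain_inter_box m hr h2]
    _ = ENNReal.ofReal (r ^ (m + 1)) * volume (Hpoly m 1) := by
        rw [Hpoly_smul m hr, Measure.addHaar_smul_of_nonneg volume hr.le,
          Module.finrank_fin_fun]
end

section
/- The 4-dimensional Lebesgue volume of the polytope H_4(1) = {(x_1, x_2, x_3, x_4) ∈ ℝ⁴ : |x_1| ≤ 1, |x_{j+1} − x_j| ≤ 1 for j = 1, 2, 3, |x_4| ≤ 1} equals 115/12. -/
open MeasureTheory Set intervalIntegral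

noncomputable def f3 (c : ℝ) : ℝ := max 0 (min (c+1) 1 - max (c-1) (-1))
noncomputable def f2 (b : ℝ) : ℝ := ∫ c in (b-1)..(b+1), f3 c
noncomputable def f1 (a : ℝ) : ℝ := ∫ b in (a-1)..(a+1), f2 b

lemma f3_cont : Continuous f3 := by unfold f3; fun_prop
lemma f3_nonneg (c : ℝ) : 0 ≤ f3 c := le_max_left _ _

lemma f3_left {c : ℝ} (h1 : -2 ≤ c) (h2 : c ≤ 0) : f3 c = c + 2 := by
  have e1 : max (c-1) (-1) = -1 := max_eq_right (by linarith)
  have e2 : min (c+1) 1 = c+1 := min_eq_left (by linarith)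
  unfold f3; rw [e1, e2, max_eq_right (by linarith)]; ring

lemma f3_right {c : ℝ} (h1 : 0 ≤ c) (h2 : c ≤ 2) : f3 c = 2 - c := by
  have e1 : max (c-1) (-1) = c-1 := max_eq_left (by linarith)
  have e2 : min (c+1) 1 = 1 := min_eq_right (by linarith)
  unfold f3; rw [e1, e2, max_eq_right (by linarith)]; ring

lemma f3_zero_left {c : ℝ} (h : c ≤ -2) : f3 c = 0 := by
  have e1 : max (c-1) (-1) = -1 := max_eq_right (by linarith)
  have e2 : min (c+1) 1 = c+1 := min_eq_left (by linarith)
  unfold f3; rw [e1, e2, max_eq_left (by linarith)]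

lemma f3_zero_right {c : ℝ} (h : 2 ≤ c) : f3 c = 0 := by
  have e1 : max (c-1) (-1) = c-1 := max_eq_left (by linarith)
  have e2 : min (c+1) 1 = 1 := min_eq_right (by linarith)
  unfold f3; rw [e1, e2, max_eq_left (by linarith)]

lemma integral_cubic (k0 k1 k2 k3 p q : ℝ) :
    ∫ x in p..q, (k0 + k1*x + k2*x^2 + k3*x^3) =
      (k0*q + k1*q^2/2 + k2*q^3/3 + k3*q^4/4) - (k0*p + k1*p^2/2 + k2*p^3/3 + k3*p^4/4) := by
  have : ∀ x : ℝ, HasDerivAt (fun y : ℝ => k0*y + k1*y^2/2 + k2*y^3/3 + k3*y^4/4)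
      (k0 + k1*x + k2*x^2 + k3*x^3) x := by
    intro x
    have h1 : HasDerivAt (fun y : ℝ => k0*y) k0 x := by
      simpa using (hasDerivAt_id x).const_mul k0
    have h2 : HasDerivAt (fun y : ℝ => k1*y^2/2) (k1*x) x := by
      have := ((hasDerivAt_pow 2 x).const_mul k1).div_const 2
      refine this.congr_deriv ?_; push_cast; ring
    have h3 : HasDerivAt (fun y : ℝ => k2*y^3/3) (k2*x^2) x := by
      have := ((hasDerivAt_pow 3 x).const_mul k2).div_const 3
      refine this.congr_deriv ?_; push_cast; ring
    have h4 : HasDerivAt (fun y : ℝ => k3*y^4/4) (k3*x^3) x := by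
      have := ((hasDerivAt_pow 4 x).const_mul k3).div_const 4
      refine this.congr_deriv ?_; push_cast; ring
    exact ((h1.add h2).add h3).add h4
  rw [integral_eq_sub_of_hasDerivAt (fun x _ => this x)
      (Continuous.intervalIntegrable (by fun_prop) p q)]

lemma f3_ii (p q : ℝ) : IntervalIntegrable f3 volume p q := f3_cont.intervalIntegrable p q

lemma f2_mid {b : ℝ} (h1 : -1 ≤ b) (h2 : b ≤ 1) : f2 b = 3 - b^2 := by
  have hsplit := integral_add_adjacent_intervals (f3_ii (b-1) 0) (f3_ii 0 (b+1))
  have e1 : ∫ c in (b-1)..(0:ℝ), f3 c = ∫ c in (b-1)..(0:ℝ), (2 + 1*c + 0*c^2 + 0*c^3) := by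
    apply integral_congr; intro c hc
    rw [uIcc_of_le (by linarith)] at hc
    rw [f3_left (by linarith [hc.1]) hc.2]; ring
  have e2 : ∫ c in (0:ℝ)..(b+1), f3 c = ∫ c in (0:ℝ)..(b+1), (2 + (-1)*c + 0*c^2 + 0*c^3) := by
    apply integral_congr; intro c hc
    rw [uIcc_of_le (by linarith)] at hc
    rw [f3_right hc.1 (by linarith [hc.2])]; ring
  unfold f2
  rw [← hsplit, e1, e2, integral_cubic, integral_cubic]; ring

lemma f2_right {b : ℝ} (h1 : 1 ≤ b) (h2 : b ≤ 2) : f2 b = (3-b)^2/2 := by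
  have hsplit := integral_add_adjacent_intervals (f3_ii (b-1) 2) (f3_ii 2 (b+1))
  have e1 : ∫ c in (b-1)..(2:ℝ), f3 c = ∫ c in (b-1)..(2:ℝ), (2 + (-1)*c + 0*c^2 + 0*c^3) := by
    apply integral_congr; intro c hc
    rw [uIcc_of_le (by linarith)] at hc
    rw [f3_right (by linarith [hc.1]) hc.2]; ring
  have e2 : ∫ c in (2:ℝ)..(b+1), f3 c = 0 := by
    rw [show (0:ℝ) = ∫ c in (2:ℝ)..(b+1), (0:ℝ) by simp]
    apply integral_congr; intro c hc
    rw [uIcc_of_le (by linarith)] at hc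
    exact f3_zero_right hc.1
  unfold f2
  rw [← hsplit, e1, e2, integral_cubic]; ring

lemma f2_left {b : ℝ} (h1 : -2 ≤ b) (h2 : b ≤ -1) : f2 b = (3+b)^2/2 := by
  have hsplit := integral_add_adjacent_intervals (f3_ii (b-1) (-2)) (f3_ii (-2) (b+1))
  have e1 : ∫ c in (b-1)..(-2:ℝ), f3 c = 0 := by
    rw [show (0:ℝ) = ∫ c in (b-1)..(-2:ℝ), (0:ℝ) by simp]
    apply integral_congr; intro c hc
    rw [uIcc_of_le (by linarith)] at hc
    exact f3_zero_left hc.2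
  have e2 : ∫ c in (-2:ℝ)..(b+1), f3 c = ∫ c in (-2:ℝ)..(b+1), (2 + 1*c + 0*c^2 + 0*c^3) := by
    apply integral_congr; intro c hc
    rw [uIcc_of_le (by linarith)] at hc
    rw [f3_left hc.1 (by linarith [hc.2])]; ring
  unfold f2
  rw [← hsplit, e1, e2, integral_cubic]; ring

lemma f2_cont : Continuous f2 := by
  have hprim : Continuous fun b : ℝ => ∫ c in (0:ℝ)..b, f3 c :=
    intervalIntegral.continuous_primitive f3_ii 0
  have : f2 = fun b => (∫ c in (0:ℝ)..(b+1), f3 c) - ∫ c in (0:ℝ)..(b-1), f3 c := by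
    funext b
    have := integral_add_adjacent_intervals (f3_ii 0 (b-1)) (f3_ii (b-1) (b+1))
    unfold f2; linarith
  rw [this]
  exact (hprim.comp (by fun_prop)).sub (hprim.comp (by fun_prop))

lemma f2_nonneg (b : ℝ) : 0 ≤ f2 b :=
  integral_nonneg (by linarith) (fun c _ => f3_nonneg c)

lemma f2_ii (p q : ℝ) : IntervalIntegrable f2 volume p q := f2_cont.intervalIntegrable p q

lemma f1_right {a : ℝ} (h1 : 0 ≤ a) (h2 : a ≤ 1) : f1 a = 16/3 - 2*a^2 + a^3/2 := by
  have hsplit := integral_add_adjacent_intervals (f2_ii (a-1) 1) (f2_ii 1 (a+1))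
  have e1 : ∫ b in (a-1)..(1:ℝ), f2 b = ∫ b in (a-1)..(1:ℝ), (3 + 0*b + (-1)*b^2 + 0*b^3) := by
    apply integral_congr; intro b hb
    rw [uIcc_of_le (by linarith)] at hb
    rw [f2_mid (by linarith [hb.1]) hb.2]; ring
  have e2 : ∫ b in (1:ℝ)..(a+1), f2 b = ∫ b in (1:ℝ)..(a+1), (9/2 + (-3)*b + (1/2)*b^2 + 0*b^3) := by
    apply integral_congr; intro b hb
    rw [uIcc_of_le (by linarith)] at hb
    rw [f2_right hb.1 (by linarith [hb.2])]; ring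
  unfold f1
  rw [← hsplit, e1, e2, integral_cubic, integral_cubic]; ring

lemma f1_left {a : ℝ} (h1 : -1 ≤ a) (h2 : a ≤ 0) : f1 a = 16/3 - 2*a^2 - a^3/2 := by
  have hsplit := integral_add_adjacent_intervals (f2_ii (a-1) (-1)) (f2_ii (-1) (a+1))
  have e1 : ∫ b in (a-1)..(-1:ℝ), f2 b = ∫ b in (a-1)..(-1:ℝ), (9/2 + 3*b + (1/2)*b^2 + 0*b^3) := by
    apply integral_congr; intro b hb
    rw [uIcc_of_le (by linarith)] at hb
    rw [f2_left (by linarith [hb.1]) hb.2]; ring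
  have e2 : ∫ b in (-1:ℝ)..(a+1), f2 b = ∫ b in (-1:ℝ)..(a+1), (3 + 0*b + (-1)*b^2 + 0*b^3) := by
    apply integral_congr; intro b hb
    rw [uIcc_of_le (by linarith)] at hb
    rw [f2_mid hb.1 (by linarith [hb.2])]; ring
  unfold f1
  rw [← hsplit, e1, e2, integral_cubic, integral_cubic]; ring

lemma f1_cont : Continuous f1 := by
  have hprim : Continuous fun a : ℝ => ∫ b in (0:ℝ)..a, f2 b :=
    intervalIntegral.continuous_primitive f2_ii 0
  have : f1 = fun a => (∫ b in (0:ℝ)..(a+1), f2 b) - ∫ b in (0:ℝ)..(a-1), f2 b := by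
    funext a
    have := integral_add_adjacent_intervals (f2_ii 0 (a-1)) (f2_ii (a-1) (a+1))
    unfold f1; linarith
  rw [this]
  exact (hprim.comp (by fun_prop)).sub (hprim.comp (by fun_prop))

lemma f1_nonneg (a : ℝ) : 0 ≤ f1 a :=
  integral_nonneg (by linarith) (fun b _ => f2_nonneg b)

lemma f1_ii (p q : ℝ) : IntervalIntegrable f1 volume p q := f1_cont.intervalIntegrable p q

lemma f1_integral : ∫ a in (-1:ℝ)..1, f1 a = 115/12 := by
  have hsplit := integral_add_adjacent_intervals (f1_ii (-1) 0) (f1_ii 0 1)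
  have e1 : ∫ a in (-1:ℝ)..(0:ℝ), f1 a
      = ∫ a in (-1:ℝ)..(0:ℝ), (16/3 + 0*a + (-2)*a^2 + (-(1/2))*a^3) := by
    apply integral_congr; intro a ha
    rw [uIcc_of_le (by norm_num)] at ha
    rw [f1_left ha.1 ha.2]; ring
  have e2 : ∫ a in (0:ℝ)..(1:ℝ), f1 a
      = ∫ a in (0:ℝ)..(1:ℝ), (16/3 + 0*a + (-2)*a^2 + (1/2)*a^3) := by
    apply integral_congr; intro a ha
    rw [uIcc_of_le (by norm_num)] at ha
    rw [f1_right ha.1 ha.2]; ring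
  rw [← hsplit, e1, e2, integral_cubic, integral_cubic]; norm_num

def T3 (b : ℝ) : Set (ℝ × ℝ) := {r | |r.1 - b| ≤ 1 ∧ |r.2 - r.1| ≤ 1 ∧ |r.2| ≤ 1}
def T2 (a : ℝ) : Set (ℝ × ℝ × ℝ) :=
  {q | |q.1 - a| ≤ 1 ∧ |q.2.1 - q.1| ≤ 1 ∧ |q.2.2 - q.2.1| ≤ 1 ∧ |q.2.2| ≤ 1}
def A4 : Set (ℝ × ℝ × ℝ × ℝ) :=
  {p | |p.1| ≤ 1 ∧ |p.2.1 - p.1| ≤ 1 ∧ |p.2.2.1 - p.2.1| ≤ 1 ∧ |p.2.2.2 - p.2.2.1| ≤ 1 ∧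
    |p.2.2.2| ≤ 1}

lemma T3_meas (b : ℝ) : MeasurableSet (T3 b) := by
  have : T3 b = {r : ℝ × ℝ | |r.1 - b| ≤ 1} ∩ ({r | |r.2 - r.1| ≤ 1} ∩ {r | |r.2| ≤ 1}) := rfl
  rw [this]
  exact ((isClosed_le (by fun_prop) continuous_const).inter
    ((isClosed_le (by fun_prop) continuous_const).inter
      (isClosed_le (by fun_prop) continuous_const))).measurableSet

lemma T2_meas (a : ℝ) : MeasurableSet (T2 a) := by
  have : T2 a = {q : ℝ × ℝ × ℝ | |q.1 - a| ≤ 1} ∩ ({q | |q.2.1 - q.1| ≤ 1} ∩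
      ({q | |q.2.2 - q.2.1| ≤ 1} ∩ {q | |q.2.2| ≤ 1})) := rfl
  rw [this]
  exact ((isClosed_le (by fun_prop) continuous_const).inter
    ((isClosed_le (by fun_prop) continuous_const).inter
      ((isClosed_le (by fun_prop) continuous_const).inter
        (isClosed_le (by fun_prop) continuous_const)))).measurableSet

lemma A4_meas : MeasurableSet A4 := by
  have : A4 = {p : ℝ × ℝ × ℝ × ℝ | |p.1| ≤ 1} ∩ ({p | |p.2.1 - p.1| ≤ 1} ∩
      ({p | |p.2.2.1 - p.2.1| ≤ 1} ∩ ({p | |p.2.2.2 - p.2.2.1| ≤ 1} ∩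
        {p | |p.2.2.2| ≤ 1}))) := rfl
  rw [this]
  exact ((isClosed_le (by fun_prop) continuous_const).inter
    ((isClosed_le (by fun_prop) continuous_const).inter
      ((isClosed_le (by fun_prop) continuous_const).inter
        ((isClosed_le (by fun_prop) continuous_const).inter
          (isClosed_le (by fun_prop) continuous_const))))).measurableSet

lemma vol_T3 (b : ℝ) :
    volume (T3 b) = ∫⁻ c in Icc (b-1) (b+1), ENNReal.ofReal (f3 c) := by
  rw [Measure.volume_eq_prod, Measure.prod_apply (T3_meas b)]
  have key : ∀ c : ℝ, volume (Prod.mk c ⁻¹' T3 b)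
      = (Icc (b-1) (b+1)).indicator (fun c => ENNReal.ofReal (f3 c)) c := by
    intro c
    by_cases hc : c ∈ Icc (b-1) (b+1)
    · rw [indicator_of_mem hc]
      rw [mem_Icc] at hc
      have hset : Prod.mk c ⁻¹' T3 b = Icc (max (c-1) (-1)) (min (c+1) 1) := by
        ext d
        simp only [T3, mem_preimage, mem_setOf_eq, mem_Icc, abs_le, max_le_iff, le_min_iff]
        constructor
        · rintro ⟨h1, h2, h3⟩
          exact ⟨⟨by linarith [h2.1], h3.1⟩, by linarith [h2.2], h3.2⟩
        · rintro ⟨⟨h1, h2⟩, h3, h4⟩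
          exact ⟨⟨by linarith, by linarith⟩, ⟨by linarith, by linarith⟩, h2, h4⟩
      rw [hset, Real.volume_Icc]
      unfold f3
      rcases le_total (min (c+1) 1 - max (c-1) (-1)) 0 with h | h
      · rw [max_eq_left h, ENNReal.ofReal_of_nonpos h, ENNReal.ofReal_zero]
      · rw [max_eq_right h]
    · rw [indicator_of_notMem hc]
      have hempty : Prod.mk c ⁻¹' T3 b = ∅ := by
        ext d
        simp only [T3, mem_preimage, mem_setOf_eq, mem_empty_iff_false, iff_false, not_and]
        intro h1
        rw [abs_le] at h1
        exact absurd (mem_Icc.2 ⟨by linarith [h1.1], by linarith [h1.2]⟩) hc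
      rw [hempty, measure_empty]
  rw [lintegral_congr key, lintegral_indicator measurableSet_Icc]

lemma vol_T2 (a : ℝ) :
    volume (T2 a) = ∫⁻ b in Icc (a-1) (a+1), volume (T3 b) := by
  rw [Measure.volume_eq_prod, Measure.prod_apply (T2_meas a)]
  have key : ∀ b : ℝ, volume (Prod.mk b ⁻¹' T2 a)
      = (Icc (a-1) (a+1)).indicator (fun b => volume (T3 b)) b := by
    intro b
    by_cases hb : b ∈ Icc (a-1) (a+1)
    · rw [indicator_of_mem hb]
      rw [mem_Icc] at hb
      have hset : Prod.mk b ⁻¹' T2 a = T3 b := by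
        ext r
        simp only [T2, T3, mem_preimage, mem_setOf_eq]
        constructor
        · rintro ⟨-, h⟩; exact h
        · intro h
          exact ⟨by rw [abs_le]; constructor <;> linarith [hb.1, hb.2], h⟩
      rw [hset]
    · rw [indicator_of_notMem hb]
      have hempty : Prod.mk b ⁻¹' T2 a = ∅ := by
        ext r
        simp only [T2, mem_preimage, mem_setOf_eq, mem_empty_iff_false, iff_false, not_and]
        intro h1
        rw [abs_le] at h1
        exact absurd (mem_Icc.2 ⟨by linarith [h1.1], by linarith [h1.2]⟩) hb
      rw [hempty, measure_empty]
  rw [lintegral_congr key, lintegral_indicator measurableSet_Icc]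

lemma vol_A4 : volume A4 = ∫⁻ a in Icc (-1 : ℝ) 1, volume (T2 a) := by
  rw [Measure.volume_eq_prod, Measure.prod_apply A4_meas]
  have key : ∀ a : ℝ, volume (Prod.mk a ⁻¹' A4)
      = (Icc (-1 : ℝ) 1).indicator (fun a => volume (T2 a)) a := by
    intro a
    by_cases ha : a ∈ Icc (-1 : ℝ) 1
    · rw [indicator_of_mem ha]
      rw [mem_Icc] at ha
      have hset : Prod.mk a ⁻¹' A4 = T2 a := by
        ext q
        simp only [A4, T2, mem_preimage, mem_setOf_eq]
        constructor
        · rintro ⟨-, h⟩; exact h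
        · intro h
          exact ⟨by rw [abs_le]; exact ha, h⟩
      rw [hset]
    · rw [indicator_of_notMem ha]
      have hempty : Prod.mk a ⁻¹' A4 = ∅ := by
        ext q
        simp only [A4, mem_preimage, mem_setOf_eq, mem_empty_iff_false, iff_false, not_and]
        intro h1
        rw [abs_le] at h1
        exact absurd (mem_Icc.2 h1) ha
      rw [hempty, measure_empty]
  rw [lintegral_congr key, lintegral_indicator measurableSet_Icc]

lemma lintegral_Icc_ofReal {f : ℝ → ℝ} (hc : Continuous f) (hnn : ∀ x, 0 ≤ f x)
    {p q : ℝ} (hpq : p ≤ q) :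
    ∫⁻ x in Icc p q, ENNReal.ofReal (f x) = ENNReal.ofReal (∫ x in p..q, f x) := by
  rw [← Measure.restrict_congr_set Ioc_ae_eq_Icc, intervalIntegral.integral_of_le hpq,
    ofReal_integral_eq_lintegral_ofReal (hc.integrableOn_Ioc) (ae_of_all _ hnn)]

-- equivalence part
lemma phi_mp : MeasurePreserving (fun x : Fin 4 → ℝ => (x 0, x 1, x 2, x 3)) volume volume := by
  have h4 := volume_preserving_piFinSuccAbove (fun _ : Fin 4 => ℝ) 0
  have h3 := volume_preserving_piFinSuccAbove (fun _ : Fin 3 => ℝ) 0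
  have h2 := volume_preserving_finTwoArrow ℝ
  have c3 : MeasurePreserving
      (Prod.map (id : ℝ → ℝ) (MeasurableEquiv.finTwoArrow : (Fin 2 → ℝ) ≃ᵐ ℝ × ℝ))
      volume volume := (MeasurePreserving.id volume).prod h2
  have c2 : MeasurePreserving
      (Prod.map (id : ℝ → ℝ) (MeasurableEquiv.piFinSuccAbove (fun _ : Fin 3 => ℝ) 0))
      volume volume := (MeasurePreserving.id volume).prod h3
  have c1 : MeasurePreserving
      (Prod.map (id : ℝ → ℝ) (Prod.map (id : ℝ → ℝ)
        (MeasurableEquiv.finTwoArrow : (Fin 2 → ℝ) ≃ᵐ ℝ × ℝ)))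
      volume volume := (MeasurePreserving.id volume).prod c3
  have hcomp := (c1.comp c2).comp h4
  exact hcomp


/-- The volume of the polytope
`H_4(1) = {(x₁, x₂, x₃, x₄) ∈ ℝ⁴ : |x₁| ≤ 1, |x_{j+1} − x_j| ≤ 1 (j = 1,2,3), |x₄| ≤ 1}`
equals `115/12`. -/
theorem volume_H4_one :
    volume {x : Fin 4 → ℝ |
        |x 0| ≤ 1 ∧ |x 1 - x 0| ≤ 1 ∧ |x 2 - x 1| ≤ 1 ∧ |x 3 - x 2| ≤ 1 ∧ |x 3| ≤ 1}
      = 115 / 12 := by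
  have hpre : {x : Fin 4 → ℝ |
        |x 0| ≤ 1 ∧ |x 1 - x 0| ≤ 1 ∧ |x 2 - x 1| ≤ 1 ∧ |x 3 - x 2| ≤ 1 ∧ |x 3| ≤ 1}
      = (fun x : Fin 4 → ℝ => (x 0, x 1, x 2, x 3)) ⁻¹' A4 := rfl
  rw [hpre, phi_mp.measure_preimage A4_meas.nullMeasurableSet, vol_A4]
  have h3' : ∀ b : ℝ, volume (T3 b) = ENNReal.ofReal (f2 b) := fun b => by
    rw [vol_T3, lintegral_Icc_ofReal f3_cont f3_nonneg (by linarith)]; rfl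
  have h2' : ∀ a : ℝ, volume (T2 a) = ENNReal.ofReal (f1 a) := fun a => by
    rw [vol_T2, lintegral_congr (fun b => h3' b),
      lintegral_Icc_ofReal f2_cont f2_nonneg (by linarith)]
    rfl
  rw [lintegral_congr (fun a => h2' a),
    lintegral_Icc_ofReal f1_cont f1_nonneg (by norm_num), f1_integral,
    ENNReal.ofReal_div_of_pos (by norm_num)]
  norm_num
end

section
/- The 5-dimensional Lebesgue volume of the polytope H_5(1) = {(x_1, …, x_5) ∈ ℝ⁵ : |x_1| ≤ 1, |x_{j+1} − x_j| ≤ 1 for j = 1, …, 4, |x_5| ≤ 1} equals 88/5. -/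
open MeasureTheory

lemma hasDerivAt_pow_abs (m : ℕ) (x : ℝ) :
    HasDerivAt (fun s : ℝ => s ^ (m+1) * |s|) (((m:ℝ)+2) * (x ^ m * |x|)) x := by
  rcases lt_trichotomy x 0 with hx | hx | hx
  · have h1 : HasDerivAt (fun s : ℝ => -(s ^ (m+2))) (-(((m:ℝ)+2) * x^(m+1))) x := by
      have h2 := (hasDerivAt_pow (m+2) x).neg
      refine h2.congr_deriv ?_
      push_cast
      ring_nf
    have heq : (fun s : ℝ => s ^ (m+1) * |s|) =ᶠ[nhds x] (fun s : ℝ => -(s ^ (m+2))) := by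
      filter_upwards [Iio_mem_nhds hx] with s hs
      rw [abs_of_neg hs]; ring
    have h3 := h1.congr_of_eventuallyEq heq
    refine h3.congr_deriv ?_
    rw [abs_of_neg hx]; ring
  · subst hx
    have key : HasDerivAt (fun s : ℝ => s ^ (m+1) * |s|) 0 0 := by
      rw [hasDerivAt_iff_tendsto_slope]
      have hk : ∀ s ∈ ({(0:ℝ)}ᶜ : Set ℝ), s ^ m * |s| = slope (fun s : ℝ => s ^ (m+1) * |s|) 0 s := by
        intro s hs
        have hs0 : s ≠ 0 := hs
        rw [slope_def_field]
        field_simp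
        ring
      have hc : Continuous (fun s : ℝ => s ^ m * |s|) := by continuity
      have t1 : Filter.Tendsto (fun s : ℝ => s ^ m * |s|) (nhdsWithin 0 ({(0:ℝ)}ᶜ : Set ℝ)) (nhds 0) := by
        have := (hc.tendsto 0).mono_left (nhdsWithin_le_nhds (s := ({(0:ℝ)}ᶜ : Set ℝ)))
        simpa using this
      exact t1.congr' (Filter.eventuallyEq_of_mem self_mem_nhdsWithin hk)
    convert key using 1
    simp
  · have h1 : HasDerivAt (fun s : ℝ => s ^ (m+2)) ((((m:ℝ))+2) * x^(m+1)) x := by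
      have := hasDerivAt_pow (m+2) x
      refine this.congr_deriv ?_
      push_cast
      ring_nf
    have heq : (fun s : ℝ => s ^ (m+1) * |s|) =ᶠ[nhds x] (fun s : ℝ => s ^ (m+2)) := by
      filter_upwards [Ioi_mem_nhds hx] with s hs
      rw [abs_of_pos hs]; ring
    have h3 := h1.congr_of_eventuallyEq heq
    refine h3.congr_deriv ?_
    rw [abs_of_pos hx]; ring

lemma hasDerivAt_B (m : ℕ) (c x : ℝ) :
    HasDerivAt (fun s : ℝ => (s - c) ^ (m+1) * |s - c|) (((m:ℝ)+2) * ((x - c) ^ m * |x - c|)) x := by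
  have h := (hasDerivAt_pow_abs m (x - c)).comp x ((hasDerivAt_id x).sub_const c)
  exact h.congr_deriv (mul_one _)

noncomputable def psi2 (s : ℝ) : ℝ := (|s - 2| + |s + 2|) / 2 - |s|

noncomputable def psi3 (t : ℝ) : ℝ :=
  3/4*((t-1)*|t-1| - (t+1)*|t+1|) + 1/4*((t+3)*|t+3| - (t-3)*|t-3|)

noncomputable def psi4 (t : ℝ) : ℝ :=
  1/2*(t^2*|t|) - 1/3*((t-2)^2*|t-2| + (t+2)^2*|t+2|)
    + 1/12*((t-4)^2*|t-4| + (t+4)^2*|t+4|)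

noncomputable def psi5 (t : ℝ) : ℝ :=
  5/24*((t+1)^3*|t+1| - (t-1)^3*|t-1|) + 5/48*((t-3)^3*|t-3| - (t+3)^3*|t+3|)
    + 1/48*((t+5)^3*|t+5| - (t-5)^3*|t-5|)

lemma psi2_cont : Continuous psi2 := by unfold psi2; continuity
lemma psi3_cont : Continuous psi3 := by unfold psi3; continuity
lemma psi4_cont : Continuous psi4 := by unfold psi4; continuity
lemma psi5_cont : Continuous psi5 := by unfold psi5; continuity

lemma int2 (t : ℝ) : ∫ s in (t-1)..(t+1), psi2 s = psi3 t := by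
  have key : ∀ x : ℝ, HasDerivAt
      (fun s : ℝ => ((s-2)^1*|s-2| + (s-(-2))^1*|s-(-2)|)/4 - (s-0)^1*|s-0|/2) (psi2 x) x := by
    intro x
    have h := (((hasDerivAt_B 0 2 x).add (hasDerivAt_B 0 (-2) x)).div_const 4).sub
      ((hasDerivAt_B 0 0 x).div_const 2)
    refine h.congr_deriv ?_
    unfold psi2
    push_cast
    simp only [pow_zero, one_mul, sub_neg_eq_add, sub_zero]
    ring
  rw [intervalIntegral.integral_eq_sub_of_hasDerivAt (fun x _ => key x)
    (psi2_cont.intervalIntegrable _ _)]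
  simp only [sub_neg_eq_add, sub_zero]
  unfold psi3
  rw [show t+1-2 = t-1 by ring, show t-1-2 = t-3 by ring, show t+1+2 = t+3 by ring,
    show t-1+2 = t+1 by ring]
  ring

lemma int3 (t : ℝ) : ∫ s in (t-1)..(t+1), psi3 s = psi4 t := by
  have key : ∀ x : ℝ, HasDerivAt
      (fun s : ℝ => ((s-1)^2*|s-1| - (s-(-1))^2*|s-(-1)|)/4
        + ((s-(-3))^2*|s-(-3)| - (s-3)^2*|s-3|)/12) (psi3 x) x := by
    intro x
    have h := (((hasDerivAt_B 1 1 x).sub (hasDerivAt_B 1 (-1) x)).div_const 4).add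
      (((hasDerivAt_B 1 (-3) x).sub (hasDerivAt_B 1 3 x)).div_const 12)
    refine h.congr_deriv ?_
    unfold psi3
    push_cast
    simp only [pow_one, sub_neg_eq_add]
    ring
  rw [intervalIntegral.integral_eq_sub_of_hasDerivAt (fun x _ => key x)
    (psi3_cont.intervalIntegrable _ _)]
  simp only [sub_neg_eq_add]
  unfold psi4
  rw [show t+1-1 = t by ring, show t-1-1 = t-2 by ring, show t+1+1 = t+2 by ring,
    show t-1+1 = t by ring, show t+1+3 = t+4 by ring, show t-1+3 = t+2 by ring,
    show t+1-3 = t-2 by ring, show t-1-3 = t-4 by ring]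
  ring

lemma int4 (t : ℝ) : ∫ s in (t-1)..(t+1), psi4 s = psi5 t := by
  have key : ∀ x : ℝ, HasDerivAt
      (fun s : ℝ => ((s-0)^3*|s-0|)/8 - ((s-2)^3*|s-2| + (s-(-2))^3*|s-(-2)|)/12
        + ((s-4)^3*|s-4| + (s-(-4))^3*|s-(-4)|)/48) (psi4 x) x := by
    intro x
    have h := (((hasDerivAt_B 2 0 x).div_const 8).sub
      (((hasDerivAt_B 2 2 x).add (hasDerivAt_B 2 (-2) x)).div_const 12)).add
      (((hasDerivAt_B 2 4 x).add (hasDerivAt_B 2 (-4) x)).div_const 48)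
    refine h.congr_deriv ?_
    unfold psi4
    push_cast
    simp only [sub_neg_eq_add, sub_zero]
    ring
  rw [intervalIntegral.integral_eq_sub_of_hasDerivAt (fun x _ => key x)
    (psi4_cont.intervalIntegrable _ _)]
  simp only [sub_neg_eq_add, sub_zero]
  unfold psi5
  rw [show t+1-2 = t-1 by ring, show t-1-2 = t-3 by ring, show t+1+2 = t+3 by ring,
    show t-1+2 = t+1 by ring, show t+1-4 = t-3 by ring, show t-1-4 = t-5 by ring,
    show t+1+4 = t+5 by ring, show t-1+4 = t+3 by ring]
  ring

lemma int5 : ∫ s in (-1:ℝ)..1, psi5 s = 88/5 := by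
  have key : ∀ x : ℝ, HasDerivAt
      (fun s : ℝ => ((s-(-1))^4*|s-(-1)| - (s-1)^4*|s-1|)/24
        + ((s-3)^4*|s-3| - (s-(-3))^4*|s-(-3)|)/48
        + ((s-(-5))^4*|s-(-5)| - (s-5)^4*|s-5|)/240) (psi5 x) x := by
    intro x
    have h := ((((hasDerivAt_B 3 (-1) x).sub (hasDerivAt_B 3 1 x)).div_const 24).add
      (((hasDerivAt_B 3 3 x).sub (hasDerivAt_B 3 (-3) x)).div_const 48)).add
      (((hasDerivAt_B 3 (-5) x).sub (hasDerivAt_B 3 5 x)).div_const 240)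
    refine h.congr_deriv ?_
    unfold psi5
    push_cast
    simp only [sub_neg_eq_add]
    ring
  rw [intervalIntegral.integral_eq_sub_of_hasDerivAt (fun x _ => key x)
    (psi5_cont.intervalIntegrable _ _)]
  norm_num

lemma psi2_nonneg (s : ℝ) : 0 ≤ psi2 s := by
  have h : |(s-2) + (s+2)| ≤ |s-2| + |s+2| := abs_add_le _ _
  rw [show (s-2)+(s+2) = 2*s by ring, abs_mul, show |(2:ℝ)| = 2 by norm_num] at h
  unfold psi2
  linarith

lemma psi3_nonneg (t : ℝ) : 0 ≤ psi3 t := by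
  rw [← int2 t]
  exact intervalIntegral.integral_nonneg (by linarith) (fun u _ => psi2_nonneg u)

lemma psi4_nonneg (t : ℝ) : 0 ≤ psi4 t := by
  rw [← int3 t]
  exact intervalIntegral.integral_nonneg (by linarith) (fun u _ => psi3_nonneg u)

lemma psi5_nonneg (t : ℝ) : 0 ≤ psi5 t := by
  rw [← int4 t]
  exact intervalIntegral.integral_nonneg (by linarith) (fun u _ => psi4_nonneg u)

lemma lint_if (f : ℝ → ℝ) (hc : Continuous f) (h0 : ∀ s, 0 ≤ f s) (lo hi : ℝ) (hle : lo ≤ hi) :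
    ∫⁻ s, (if lo ≤ s ∧ s ≤ hi then ENNReal.ofReal (f s) else 0)
      = ENNReal.ofReal (∫ s in lo..hi, f s) := by
  have h1 : ∀ s : ℝ, (if lo ≤ s ∧ s ≤ hi then ENNReal.ofReal (f s) else 0)
      = Set.indicator (Set.Icc lo hi) (fun s => ENNReal.ofReal (f s)) s := by
    intro s
    rw [Set.indicator_apply]
    exact if_congr (by simp [Set.mem_Icc]) rfl rfl
  simp_rw [h1]
  rw [lintegral_indicator measurableSet_Icc]
  rw [← MeasureTheory.ofReal_integral_eq_lintegral_ofReal hc.integrableOn_Icc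
    (Filter.Eventually.of_forall h0)]
  rw [intervalIntegral.integral_of_le hle, MeasureTheory.integral_Icc_eq_integral_Ioc]

lemma step (f : ℝ → ℝ) (hc : Continuous f) (h0 : ∀ s, 0 ≤ f s) (t : ℝ) :
    ∫⁻ s, (if |s - t| ≤ 1 then ENNReal.ofReal (f s) else 0)
      = ENNReal.ofReal (∫ s in (t-1)..(t+1), f s) := by
  have h1 : ∀ s : ℝ, (|s - t| ≤ 1) = (t-1 ≤ s ∧ s ≤ t+1) := by
    intro s
    rw [eq_iff_iff, abs_le]
    constructor <;> rintro ⟨u, v⟩ <;> constructor <;> linarith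
  simp_rw [h1]
  exact lint_if f hc h0 _ _ (by linarith)

lemma levelstep (P : Prop) [Decidable P] (f F : ℝ → ℝ) (hc : Continuous f) (h0 : ∀ s, 0 ≤ f s)
    (hint : ∀ t, ∫ s in (t-1)..(t+1), f s = F t) (t : ℝ) :
    ∫⁻ s, (if P ∧ |s - t| ≤ 1 then ENNReal.ofReal (f s) else 0)
      = if P then ENNReal.ofReal (F t) else 0 := by
  by_cases hP : P
  · simp only [hP, true_and, if_true]
    rw [step f hc h0 t, hint t]
  · simp only [hP, false_and, if_false]
    simp

lemma ofReal_max0 (x : ℝ) : ENNReal.ofReal (max x 0) = ENNReal.ofReal x := by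
  rcases le_total x 0 with h | h
  · simp [max_eq_right h, ENNReal.ofReal_eq_zero.2 h]
  · rw [max_eq_left h]

lemma slice_vol (d : ℝ) :
    volume {e : ℝ | |e - d| ≤ 1 ∧ |e| ≤ 1} = ENNReal.ofReal (psi2 d) := by
  have hset : {e : ℝ | |e - d| ≤ 1 ∧ |e| ≤ 1}
      = Set.Icc (max (d-1) (-1)) (min (d+1) 1) := by
    ext e
    simp only [Set.mem_setOf_eq, Set.mem_Icc, abs_le, max_le_iff, le_min_iff]
    constructor <;> rintro ⟨⟨h1, h2⟩, h3, h4⟩ <;>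
      exact ⟨⟨by linarith, by linarith⟩, by linarith, by linarith⟩
  rw [hset, Real.volume_Icc]
  rw [← ofReal_max0 (min (d+1) 1 - max (d-1) (-1))]
  congr 1
  unfold psi2
  simp only [abs_eq_max_neg, min_def, max_def]
  split_ifs <;> linarith

lemma peel {n : ℕ} (S : Set (Fin (n+1) → ℝ)) (hS : MeasurableSet S) :
    volume S = ∫⁻ a : ℝ, volume {y : Fin n → ℝ | Fin.cons a y ∈ S} := by
  have h := (MeasureTheory.volume_preserving_piFinSuccAbove (fun _ : Fin (n+1) => ℝ) 0).symm
  rw [← h.measure_preimage hS.nullMeasurableSet]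
  have hpre : MeasurableSet ((MeasurableEquiv.piFinSuccAbove (fun _ : Fin (n+1) => ℝ) 0).symm ⁻¹' S) :=
    hS.preimage (MeasurableEquiv.piFinSuccAbove _ 0).symm.measurable
  rw [MeasureTheory.Measure.volume_eq_prod, MeasureTheory.Measure.prod_apply hpre]
  refine lintegral_congr fun a => ?_
  congr 1
  ext y
  simp [MeasurableEquiv.piFinSuccAbove, Fin.insertNthEquiv, Fin.insertNth_zero']

lemma peel1 (A : Set ℝ) (hA : MeasurableSet A) :
    volume {y : Fin 1 → ℝ | y 0 ∈ A} = volume A := by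
  have h := MeasureTheory.volume_preserving_funUnique (Fin 1) ℝ
  rw [← h.measure_preimage hA.nullMeasurableSet]
  congr 1

lemma mAbs {α : Type*} [MeasurableSpace α] (f : α → ℝ) (hf : Measurable f) :
    MeasurableSet {x : α | |f x| ≤ 1} :=
  measurableSet_le hf.abs measurable_const

lemma key1 (a b c d : ℝ) :
    volume {y : Fin 1 → ℝ | |a| ≤ 1 ∧ |b - a| ≤ 1 ∧ |c - b| ≤ 1 ∧ |d - c| ≤ 1
        ∧ |y 0 - d| ≤ 1 ∧ |y 0| ≤ 1}
      = if ((|a| ≤ 1 ∧ |b - a| ≤ 1) ∧ |c - b| ≤ 1) ∧ |d - c| ≤ 1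
        then ENNReal.ofReal (psi2 d) else 0 := by
  have hA : MeasurableSet {e : ℝ | |a| ≤ 1 ∧ |b - a| ≤ 1 ∧ |c - b| ≤ 1 ∧ |d - c| ≤ 1
      ∧ |e - d| ≤ 1 ∧ |e| ≤ 1} :=
    (MeasurableSet.const _).inter <| (MeasurableSet.const _).inter <|
      (MeasurableSet.const _).inter <| (MeasurableSet.const _).inter <|
      (mAbs (fun e : ℝ => e - d) (measurable_id.sub measurable_const)).inter
        (mAbs (fun e : ℝ => e) measurable_id)
  have e1 : {y : Fin 1 → ℝ | |a| ≤ 1 ∧ |b - a| ≤ 1 ∧ |c - b| ≤ 1 ∧ |d - c| ≤ 1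
        ∧ |y 0 - d| ≤ 1 ∧ |y 0| ≤ 1}
      = {y : Fin 1 → ℝ | y 0 ∈ {e : ℝ | |a| ≤ 1 ∧ |b - a| ≤ 1 ∧ |c - b| ≤ 1 ∧ |d - c| ≤ 1
        ∧ |e - d| ≤ 1 ∧ |e| ≤ 1}} := rfl
  rw [e1, peel1 _ hA]
  by_cases hP : ((|a| ≤ 1 ∧ |b - a| ≤ 1) ∧ |c - b| ≤ 1) ∧ |d - c| ≤ 1
  · obtain ⟨⟨⟨h1, h2⟩, h3⟩, h4⟩ := hP
    rw [if_pos ⟨⟨⟨h1, h2⟩, h3⟩, h4⟩]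
    rw [show {e : ℝ | |a| ≤ 1 ∧ |b - a| ≤ 1 ∧ |c - b| ≤ 1 ∧ |d - c| ≤ 1
        ∧ |e - d| ≤ 1 ∧ |e| ≤ 1} = {e : ℝ | |e - d| ≤ 1 ∧ |e| ≤ 1} from by
      ext e; simp [h1, h2, h3, h4]]
    exact slice_vol d
  · rw [if_neg hP]
    rw [show {e : ℝ | |a| ≤ 1 ∧ |b - a| ≤ 1 ∧ |c - b| ≤ 1 ∧ |d - c| ≤ 1
        ∧ |e - d| ≤ 1 ∧ |e| ≤ 1} = (∅ : Set ℝ) from by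
      ext e
      simp only [Set.mem_setOf_eq, Set.mem_empty_iff_false, iff_false]
      rintro ⟨h1, h2, h3, h4, -⟩
      exact hP ⟨⟨⟨h1, h2⟩, h3⟩, h4⟩]
    simp

lemma key2 (a b c : ℝ) :
    volume {y : Fin 2 → ℝ | |a| ≤ 1 ∧ |b - a| ≤ 1 ∧ |c - b| ≤ 1
        ∧ |y 0 - c| ≤ 1 ∧ |y 1 - y 0| ≤ 1 ∧ |y 1| ≤ 1}
      = if (|a| ≤ 1 ∧ |b - a| ≤ 1) ∧ |c - b| ≤ 1 then ENNReal.ofReal (psi3 c) else 0 := by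
  have hS : MeasurableSet {y : Fin 2 → ℝ | |a| ≤ 1 ∧ |b - a| ≤ 1 ∧ |c - b| ≤ 1
      ∧ |y 0 - c| ≤ 1 ∧ |y 1 - y 0| ≤ 1 ∧ |y 1| ≤ 1} :=
    (MeasurableSet.const _).inter <| (MeasurableSet.const _).inter <|
      (MeasurableSet.const _).inter <|
      (mAbs _ ((measurable_pi_apply 0).sub measurable_const)).inter <|
      (mAbs _ ((measurable_pi_apply 1).sub (measurable_pi_apply 0))).inter
        (mAbs _ (measurable_pi_apply 1))
  rw [peel _ hS]
  calc ∫⁻ d : ℝ, volume {y : Fin 1 → ℝ | |a| ≤ 1 ∧ |b - a| ≤ 1 ∧ |c - b| ≤ 1 ∧ |d - c| ≤ 1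
        ∧ |y 0 - d| ≤ 1 ∧ |y 0| ≤ 1}
      = ∫⁻ d : ℝ, (if ((|a| ≤ 1 ∧ |b - a| ≤ 1) ∧ |c - b| ≤ 1) ∧ |d - c| ≤ 1
          then ENNReal.ofReal (psi2 d) else 0) := lintegral_congr fun d => key1 a b c d
    _ = if (|a| ≤ 1 ∧ |b - a| ≤ 1) ∧ |c - b| ≤ 1 then ENNReal.ofReal (psi3 c) else 0 :=
        levelstep _ psi2 psi3 psi2_cont psi2_nonneg int2 c

lemma key3 (a b : ℝ) :
    volume {y : Fin 3 → ℝ | |a| ≤ 1 ∧ |b - a| ≤ 1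
        ∧ |y 0 - b| ≤ 1 ∧ |y 1 - y 0| ≤ 1 ∧ |y 2 - y 1| ≤ 1 ∧ |y 2| ≤ 1}
      = if |a| ≤ 1 ∧ |b - a| ≤ 1 then ENNReal.ofReal (psi4 b) else 0 := by
  have hS : MeasurableSet {y : Fin 3 → ℝ | |a| ≤ 1 ∧ |b - a| ≤ 1
      ∧ |y 0 - b| ≤ 1 ∧ |y 1 - y 0| ≤ 1 ∧ |y 2 - y 1| ≤ 1 ∧ |y 2| ≤ 1} :=
    (MeasurableSet.const _).inter <| (MeasurableSet.const _).inter <|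
      (mAbs _ ((measurable_pi_apply 0).sub measurable_const)).inter <|
      (mAbs _ ((measurable_pi_apply 1).sub (measurable_pi_apply 0))).inter <|
      (mAbs _ ((measurable_pi_apply 2).sub (measurable_pi_apply 1))).inter
        (mAbs _ (measurable_pi_apply 2))
  rw [peel _ hS]
  calc ∫⁻ c : ℝ, volume {y : Fin 2 → ℝ | |a| ≤ 1 ∧ |b - a| ≤ 1 ∧ |c - b| ≤ 1
        ∧ |y 0 - c| ≤ 1 ∧ |y 1 - y 0| ≤ 1 ∧ |y 1| ≤ 1}
      = ∫⁻ c : ℝ, (if (|a| ≤ 1 ∧ |b - a| ≤ 1) ∧ |c - b| ≤ 1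
          then ENNReal.ofReal (psi3 c) else 0) := lintegral_congr fun c => key2 a b c
    _ = if |a| ≤ 1 ∧ |b - a| ≤ 1 then ENNReal.ofReal (psi4 b) else 0 :=
        levelstep _ psi3 psi4 psi3_cont psi3_nonneg int3 b

lemma key4 (a : ℝ) :
    volume {y : Fin 4 → ℝ | |a| ≤ 1
        ∧ |y 0 - a| ≤ 1 ∧ |y 1 - y 0| ≤ 1 ∧ |y 2 - y 1| ≤ 1 ∧ |y 3 - y 2| ≤ 1 ∧ |y 3| ≤ 1}
      = if |a| ≤ 1 then ENNReal.ofReal (psi5 a) else 0 := by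
  have hS : MeasurableSet {y : Fin 4 → ℝ | |a| ≤ 1
      ∧ |y 0 - a| ≤ 1 ∧ |y 1 - y 0| ≤ 1 ∧ |y 2 - y 1| ≤ 1 ∧ |y 3 - y 2| ≤ 1 ∧ |y 3| ≤ 1} :=
    (MeasurableSet.const _).inter <|
      (mAbs _ ((measurable_pi_apply 0).sub measurable_const)).inter <|
      (mAbs _ ((measurable_pi_apply 1).sub (measurable_pi_apply 0))).inter <|
      (mAbs _ ((measurable_pi_apply 2).sub (measurable_pi_apply 1))).inter <|
      (mAbs _ ((measurable_pi_apply 3).sub (measurable_pi_apply 2))).inter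
        (mAbs _ (measurable_pi_apply 3))
  rw [peel _ hS]
  calc ∫⁻ b : ℝ, volume {y : Fin 3 → ℝ | |a| ≤ 1 ∧ |b - a| ≤ 1
        ∧ |y 0 - b| ≤ 1 ∧ |y 1 - y 0| ≤ 1 ∧ |y 2 - y 1| ≤ 1 ∧ |y 2| ≤ 1}
      = ∫⁻ b : ℝ, (if |a| ≤ 1 ∧ |b - a| ≤ 1 then ENNReal.ofReal (psi4 b) else 0) :=
        lintegral_congr fun b => key3 a b
    _ = if |a| ≤ 1 then ENNReal.ofReal (psi5 a) else 0 :=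
        levelstep _ psi4 psi5 psi4_cont psi4_nonneg int4 a

/-- The volume of the polytope
`H_5(1) = {(x₁, …, x₅) ∈ ℝ⁵ : |x₁| ≤ 1, |x_{j+1} − x_j| ≤ 1 (j = 1,…,4), |x₅| ≤ 1}`
equals `88/5`. -/
theorem volume_H5_one :
    volume {x : Fin 5 → ℝ |
        |x 0| ≤ 1 ∧ |x 1 - x 0| ≤ 1 ∧ |x 2 - x 1| ≤ 1 ∧ |x 3 - x 2| ≤ 1 ∧
          |x 4 - x 3| ≤ 1 ∧ |x 4| ≤ 1} = 88 / 5 := by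
  have hS : MeasurableSet {x : Fin 5 → ℝ |
      |x 0| ≤ 1 ∧ |x 1 - x 0| ≤ 1 ∧ |x 2 - x 1| ≤ 1 ∧ |x 3 - x 2| ≤ 1 ∧
        |x 4 - x 3| ≤ 1 ∧ |x 4| ≤ 1} :=
    (mAbs _ (measurable_pi_apply 0)).inter <|
      (mAbs _ ((measurable_pi_apply 1).sub (measurable_pi_apply 0))).inter <|
      (mAbs _ ((measurable_pi_apply 2).sub (measurable_pi_apply 1))).inter <|
      (mAbs _ ((measurable_pi_apply 3).sub (measurable_pi_apply 2))).inter <|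
      (mAbs _ ((measurable_pi_apply 4).sub (measurable_pi_apply 3))).inter
        (mAbs _ (measurable_pi_apply 4))
  rw [peel _ hS]
  have step1 : ∫⁻ a : ℝ, volume {y : Fin 4 → ℝ | |a| ≤ 1
        ∧ |y 0 - a| ≤ 1 ∧ |y 1 - y 0| ≤ 1 ∧ |y 2 - y 1| ≤ 1 ∧ |y 3 - y 2| ≤ 1 ∧ |y 3| ≤ 1}
      = ∫⁻ a : ℝ, (if |a| ≤ 1 then ENNReal.ofReal (psi5 a) else 0) :=
    lintegral_congr fun a => key4 a
  rw [show (∫⁻ a : ℝ, volume {y : Fin 4 → ℝ | Fin.cons a y ∈ {x : Fin 5 → ℝ |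
        |x 0| ≤ 1 ∧ |x 1 - x 0| ≤ 1 ∧ |x 2 - x 1| ≤ 1 ∧ |x 3 - x 2| ≤ 1 ∧
          |x 4 - x 3| ≤ 1 ∧ |x 4| ≤ 1}})
      = ∫⁻ a : ℝ, volume {y : Fin 4 → ℝ | |a| ≤ 1
        ∧ |y 0 - a| ≤ 1 ∧ |y 1 - y 0| ≤ 1 ∧ |y 2 - y 1| ≤ 1 ∧ |y 3 - y 2| ≤ 1 ∧ |y 3| ≤ 1}
      from rfl, step1]
  have h2 : ∀ a : ℝ, (|a| ≤ 1) = (-1 ≤ a ∧ a ≤ 1) := fun a => by rw [eq_iff_iff, abs_le]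
  simp_rw [h2]
  rw [lint_if psi5 psi5_cont psi5_nonneg (-1) 1 (by norm_num), int5]
  rw [ENNReal.ofReal_div_of_pos (by norm_num)]
  norm_num
end

section
/- Let 0 < r < 1/4, let n ≥ 3, and let X_1, …, X_n be i.i.d. uniform random points on the circle 𝕋¹ = ℝ/ℤ. Let A be the (random) adjacency matrix of the random geometric graph G(X; r). Then E[trace(A³)] = 3r² · n(n−1)(n−2); equivalently, the expected third spectral moment E[(1/n) Σ_i λ_i(A)³] equals 3r²(n−1)(n−2). -/
open MeasureTheory ProbabilityTheory
open scoped Classical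

section Aux

open Set

local notation "𝕋" => AddCircle (1 : ℝ)


lemma area_aux (r : ℝ) (hr : 0 < r) :
    (volume.prod volume) {p : ℝ × ℝ | |p.1| ≤ r ∧ |p.1 - p.2| ≤ r ∧ |p.2| ≤ r}
      = ENNReal.ofReal (3 * r ^ 2) := by
  have hK : MeasurableSet {p : ℝ × ℝ | |p.1| ≤ r ∧ |p.1 - p.2| ≤ r ∧ |p.2| ≤ r} := by
    apply MeasurableSet.inter
    · exact measurableSet_le (measurable_fst.abs) measurable_const
    apply MeasurableSet.inter
    · exact measurableSet_le ((measurable_fst.sub measurable_snd).abs) measurable_const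
    · exact measurableSet_le (measurable_snd.abs) measurable_const
  rw [Measure.prod_apply hK]
  have hslice : ∀ y : ℝ, (Prod.mk y ⁻¹' {p : ℝ × ℝ | |p.1| ≤ r ∧ |p.1 - p.2| ≤ r ∧ |p.2| ≤ r})
      = Icc (-r) r ∩ Icc (y - r) (y + r) ∩ {z | |y| ≤ r} := by
    intro y
    ext z
    simp only [mem_preimage, mem_setOf_eq, mem_inter_iff, mem_Icc, abs_le, abs_sub_le_iff]
    constructor
    · rintro ⟨h1, h2, h3⟩; exact ⟨⟨h3, ⟨by linarith [h2.2], by linarith [h2.1]⟩⟩, h1⟩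
    · rintro ⟨⟨h3, h2⟩, h1⟩; exact ⟨h1, ⟨by linarith [h2.2], by linarith [h2.1]⟩, h3⟩
  have hval : ∀ y : ℝ, volume (Prod.mk y ⁻¹' {p : ℝ × ℝ | |p.1| ≤ r ∧ |p.1 - p.2| ≤ r ∧ |p.2| ≤ r})
      = (Icc (-r) r).indicator (fun y => ENNReal.ofReal (2 * r - |y|)) y := by
    intro y
    rw [hslice y]
    by_cases hy : |y| ≤ r
    · have : {z : ℝ | |y| ≤ r} = univ := by ext z; simp [hy]
      rw [this, inter_univ, Icc_inter_Icc, Real.volume_Icc,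
        indicator_of_mem (by simpa [abs_le] using hy)]
      congr 1
      rcases abs_cases y with ⟨h, h'⟩ | ⟨h, h'⟩
      · rw [h, max_eq_right (by linarith : -r ≤ y - r), min_eq_left (by linarith : r ≤ y + r)]; ring
      · rw [h, max_eq_left (by linarith : y - r ≤ -r), min_eq_right (by linarith : y + r ≤ r)]; ring
    · have : {z : ℝ | |y| ≤ r} = ∅ := by ext z; simp [hy]
      rw [this, inter_empty, measure_empty, indicator_of_notMem (by simpa [abs_le] using hy)]
  simp_rw [hval]
  rw [lintegral_indicator measurableSet_Icc]
  have hcont : Continuous (fun y : ℝ => 2 * r - |y|) := by continuity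
  rw [← ofReal_integral_eq_lintegral_ofReal
      (hcont.integrableOn_Icc.mono_measure le_rfl |>.mono_set (subset_refl _))
      ((ae_restrict_iff' measurableSet_Icc).2 (ae_of_all _ (fun y hy => by
        rcases mem_Icc.1 hy with ⟨h1, h2⟩
        have : |y| ≤ r := abs_le.2 ⟨h1, h2⟩
        show (0:ℝ) ≤ 2 * r - |y|
        linarith)))]
  congr 1
  rw [MeasureTheory.integral_Icc_eq_integral_Ioc, ← intervalIntegral.integral_of_le (by linarith)]
  have hi : ∀ a b : ℝ, IntervalIntegrable (fun y : ℝ => 2 * r - |y|) volume a b :=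
    fun a b => hcont.intervalIntegrable a b
  rw [← intervalIntegral.integral_add_adjacent_intervals (hi (-r) 0) (hi 0 r)]
  have h1 : ∫ y in (-r)..0, (2 * r - |y|) = ∫ y in (-r)..0, (2 * r + y) := by
    apply intervalIntegral.integral_congr
    intro y hy
    rw [uIcc_of_le (by linarith)] at hy
    show 2 * r - |y| = 2 * r + y
    rw [abs_of_nonpos (mem_Icc.1 hy).2]; ring
  have h2 : ∫ y in (0:ℝ)..r, (2 * r - |y|) = ∫ y in (0:ℝ)..r, (2 * r - y) := by
    apply intervalIntegral.integral_congr
    intro y hy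
    rw [uIcc_of_le (by linarith)] at hy
    show 2 * r - |y| = 2 * r - y
    rw [abs_of_nonneg (mem_Icc.1 hy).1]
  rw [h1, h2]
  have hder : ∀ x : ℝ, HasDerivAt (fun y : ℝ => 2 * r * y + y ^ 2 / 2) (2 * r + x) x := by
    intro x
    have h := ((hasDerivAt_id x).const_mul (2 * r)).add ((hasDerivAt_pow 2 x).div_const 2)
    exact h.congr_deriv (by ring)
  have hder' : ∀ x : ℝ, HasDerivAt (fun y : ℝ => 2 * r * y - y ^ 2 / 2) (2 * r - x) x := by
    intro x
    have h := ((hasDerivAt_id x).const_mul (2 * r)).sub ((hasDerivAt_pow 2 x).div_const 2)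
    exact h.congr_deriv (by ring)
  have e1 : ∫ y in (-r)..0, (2 * r + y) = 3 * r ^ 2 / 2 := by
    rw [intervalIntegral.integral_eq_sub_of_hasDerivAt (fun x _ => hder x)
      ((continuous_const.add continuous_id).intervalIntegrable _ _)]
    ring
  have e2 : ∫ y in (0:ℝ)..r, (2 * r - y) = 3 * r ^ 2 / 2 := by
    rw [intervalIntegral.integral_eq_sub_of_hasDerivAt (fun x _ => hder' x)
      ((continuous_const.sub continuous_id).intervalIntegrable _ _)]
    ring
  rw [e1, e2]; ring



lemma normq_lt_half (w : ℝ) (hw : |w| < 1 / 2) : ‖(w : 𝕋)‖ = |w| := by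
  rw [AddCircle.norm_eq]
  have : round (1⁻¹ * w) = 0 := by
    rw [round_eq_zero_iff]
    constructor
    · simp only [inv_one, one_mul]; linarith [abs_lt.1 hw |>.1]
    · simp only [inv_one, one_mul]; linarith [abs_lt.1 hw |>.2]
  rw [this]; simp

lemma abs_le_of_normq {r w : ℝ} (hr : 0 < r) (hr' : r < 1 / 4)
    (hw : w ∈ Ioc (-(1/2) : ℝ) (-(1/2) + 1)) (h : ‖(w : 𝕋)‖ ≤ r) : |w| ≤ r := by
  rcases hw with ⟨h1, h2⟩
  have h2' : w ≤ 1/2 := by linarith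
  by_contra hc
  push_neg at hc
  rcases lt_or_eq_of_le h2' with h3 | h3
  · rw [normq_lt_half w (abs_lt.2 ⟨by linarith, h3⟩)] at h
    linarith
  · subst h3
    rw [AddCircle.norm_eq] at h
    have : round ((1:ℝ)⁻¹ * (1/2)) = 1 := by norm_num [round_eq]
    rw [this] at h
    norm_num at h
    linarith

lemma measure_S0 (r : ℝ) (hr : 0 < r) (hr' : r < 1 / 4) :
    (volume.prod volume : Measure (𝕋 × 𝕋))
      {p : 𝕋 × 𝕋 | ‖p.1‖ ≤ r ∧ dist p.1 p.2 ≤ r ∧ ‖p.2‖ ≤ r}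
      = ENNReal.ofReal (3 * r ^ 2) := by
  haveI : Fact ((0:ℝ) < 1) := ⟨one_pos⟩
  set S₀ : Set (𝕋 × 𝕋) := {p : 𝕋 × 𝕋 | ‖p.1‖ ≤ r ∧ dist p.1 p.2 ≤ r ∧ ‖p.2‖ ≤ r} with hS₀def
  have hS₀ : MeasurableSet S₀ := by
    apply MeasurableSet.inter
    · exact measurableSet_le (measurable_fst.norm) measurable_const
    apply MeasurableSet.inter
    · exact measurableSet_le (measurable_fst.dist measurable_snd) measurable_const
    · exact measurableSet_le (measurable_snd.norm) measurable_const
  have mp : MeasurePreserving (((↑) : ℝ → 𝕋))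
      (volume.restrict (Ioc (-(1/2) : ℝ) (-(1/2) + 1))) volume :=
    AddCircle.measurePreserving_mk 1 (-(1/2))
  have mp2 := (mp.prod mp)
  rw [← mp2.measure_preimage hS₀.nullMeasurableSet]
  have hrestr : ((volume.restrict (Ioc (-(1/2):ℝ) (-(1/2) + 1))).prod
      (volume.restrict (Ioc (-(1/2):ℝ) (-(1/2) + 1))))
      = (volume.prod volume).restrict ((Ioc (-(1/2):ℝ) (-(1/2) + 1)) ×ˢ (Ioc (-(1/2):ℝ) (-(1/2) + 1))) :=
    Measure.prod_restrict _ _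
  rw [hrestr, Measure.restrict_apply₀]
  · have hseteq : (Prod.map ((↑) : ℝ → 𝕋) ((↑) : ℝ → 𝕋) ⁻¹' S₀)
        ∩ ((Ioc (-(1/2):ℝ) (-(1/2) + 1)) ×ˢ (Ioc (-(1/2):ℝ) (-(1/2) + 1)))
        = {p : ℝ × ℝ | |p.1| ≤ r ∧ |p.1 - p.2| ≤ r ∧ |p.2| ≤ r} := by
      ext ⟨y, z⟩
      simp only [mem_inter_iff, mem_preimage, Prod.map_apply, hS₀def, mem_setOf_eq,
        mem_prod, mem_Ioc]
      constructor
      · rintro ⟨⟨hy, hyz, hz⟩, hyI, hzI⟩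
        have hy' : |y| ≤ r := abs_le_of_normq hr hr' hyI hy
        have hz' : |z| ≤ r := abs_le_of_normq hr hr' hzI hz
        refine ⟨hy', ?_, hz'⟩
        have hd : dist ((y : 𝕋)) ((z : 𝕋)) = ‖((y - z : ℝ) : 𝕋)‖ := by
          rw [dist_eq_norm]
          norm_cast
        rw [hd, normq_lt_half (y - z) (by
          have := abs_sub_abs_le_abs_sub y z
          have h2 : |y - z| ≤ |y| + |z| := abs_sub y z
          linarith)] at hyz
        exact hyz
      · rintro ⟨hy, hyz, hz⟩
        have hy2 : |y| < 1/2 := lt_of_le_of_lt hy (by linarith)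
        have hz2 : |z| < 1/2 := lt_of_le_of_lt hz (by linarith)
        refine ⟨⟨?_, ?_, ?_⟩, ?_, ?_⟩
        · rw [normq_lt_half y hy2]; exact hy
        · have hd : dist ((y : 𝕋)) ((z : 𝕋)) = ‖((y - z : ℝ) : 𝕋)‖ := by
            rw [dist_eq_norm]; norm_cast
          rw [hd, normq_lt_half (y - z) (lt_of_le_of_lt hyz (by linarith))]
          exact hyz
        · rw [normq_lt_half z hz2]; exact hz
        · exact ⟨by linarith [abs_lt.1 hy2 |>.1], by linarith [abs_lt.1 hy2 |>.2]⟩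
        · exact ⟨by linarith [abs_lt.1 hz2 |>.1], by linarith [abs_lt.1 hz2 |>.2]⟩
    rw [hseteq]
    exact area_aux r hr
  · exact ((mp.measurable.prodMap mp.measurable) hS₀).nullMeasurableSet

open ProbabilityTheory

lemma prob_triangle {Ω : Type*} [MeasurableSpace Ω] (P : Measure Ω) [IsProbabilityMeasure P]
    {n : ℕ} (X : Fin n → Ω → 𝕋)
    (hmeas : ∀ i, Measurable (X i))
    (hindep : iIndepFun X P)
    (hunif : ∀ i, P.map (X i) = (volume : Measure 𝕋))
    (r : ℝ) (hr : 0 < r) (hr' : r < 1 / 4)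
    (i j k : Fin n) (hij : i ≠ j) (hjk : j ≠ k) (hik : i ≠ k) :
    P {ω | dist (X i ω) (X j ω) ≤ r ∧ dist (X j ω) (X k ω) ≤ r ∧ dist (X i ω) (X k ω) ≤ r}
      = ENNReal.ofReal (3 * r ^ 2) := by
  haveI : Fact ((0:ℝ) < 1) := ⟨one_pos⟩
  set T' : Set (𝕋 × 𝕋 × 𝕋) :=
    {p | dist p.1 p.2.1 ≤ r ∧ dist p.2.1 p.2.2 ≤ r ∧ dist p.1 p.2.2 ≤ r} with hT'def
  have hT' : MeasurableSet T' := by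
    apply MeasurableSet.inter
    · exact measurableSet_le (measurable_fst.dist (measurable_snd.fst)) measurable_const
    apply MeasurableSet.inter
    · exact measurableSet_le ((measurable_snd.fst).dist (measurable_snd.snd)) measurable_const
    · exact measurableSet_le (measurable_fst.dist (measurable_snd.snd)) measurable_const
  have hpairlaw : P.map (fun ω => (X j ω, X k ω)) =
      (volume : Measure 𝕋).prod (volume : Measure 𝕋) := by
    have h := (indepFun_iff_map_prod_eq_prod_map_map (hmeas j).aemeasurable
      (hmeas k).aemeasurable).1 (hindep.indepFun hjk)
    rwa [hunif j, hunif k] at h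
  have hIndep2 : IndepFun (X i) (fun ω => (X j ω, X k ω)) P :=
    (hindep.indepFun_prodMk hmeas j k i (fun h => hij (h.symm)) (fun h => hik h.symm) |>.symm)
  have htriplelaw : P.map (fun ω => (X i ω, (X j ω, X k ω))) =
      (volume : Measure 𝕋).prod ((volume : Measure 𝕋).prod (volume : Measure 𝕋)) := by
    have h := (indepFun_iff_map_prod_eq_prod_map_map (hmeas i).aemeasurable
      ((hmeas j).prodMk (hmeas k)).aemeasurable).1 hIndep2
    rwa [hunif i, hpairlaw] at h
  have hEeq : {ω | dist (X i ω) (X j ω) ≤ r ∧ dist (X j ω) (X k ω) ≤ r ∧ dist (X i ω) (X k ω) ≤ r}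
      = (fun ω => (X i ω, (X j ω, X k ω))) ⁻¹' T' := rfl
  rw [hEeq, ← Measure.map_apply ((hmeas i).prodMk ((hmeas j).prodMk (hmeas k))) hT',
    htriplelaw, Measure.prod_apply hT']
  have hslice : ∀ x : 𝕋, (Prod.mk x ⁻¹' T')
      = (fun p : 𝕋 × 𝕋 => (p.1 - x, p.2 - x)) ⁻¹'
        {p : 𝕋 × 𝕋 | ‖p.1‖ ≤ r ∧ dist p.1 p.2 ≤ r ∧ ‖p.2‖ ≤ r} := by
    intro x
    ext ⟨y, z⟩
    simp only [hT'def, mem_preimage, mem_setOf_eq, dist_eq_norm, sub_sub_sub_cancel_right]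
    rw [norm_sub_rev x y, norm_sub_rev x z]
  have hS₀ : MeasurableSet {p : 𝕋 × 𝕋 | ‖p.1‖ ≤ r ∧ dist p.1 p.2 ≤ r ∧ ‖p.2‖ ≤ r} := by
    apply MeasurableSet.inter
    · exact measurableSet_le (measurable_fst.norm) measurable_const
    apply MeasurableSet.inter
    · exact measurableSet_le (measurable_fst.dist measurable_snd) measurable_const
    · exact measurableSet_le (measurable_snd.norm) measurable_const
  have hconst : ∀ x : 𝕋, ((volume : Measure 𝕋).prod (volume : Measure 𝕋)) (Prod.mk x ⁻¹' T')
      = ENNReal.ofReal (3 * r ^ 2) := by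
    intro x
    rw [hslice x]
    have mpsub : MeasurePreserving (fun p : 𝕋 × 𝕋 => (p.1 - x, p.2 - x))
        ((volume : Measure 𝕋).prod (volume : Measure 𝕋))
        ((volume : Measure 𝕋).prod (volume : Measure 𝕋)) :=
      (measurePreserving_sub_right volume x).prod (measurePreserving_sub_right volume x)
    rw [mpsub.measure_preimage hS₀.nullMeasurableSet]
    exact measure_S0 r hr hr'
  simp_rw [hconst]
  rw [lintegral_const, AddCircle.measure_univ, ENNReal.ofReal_one, mul_one]

lemma count_aux (n : ℕ) (hn : 3 ≤ n) (c : ℝ) :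
    ∑ i : Fin n, ∑ k : Fin n, ∑ j : Fin n,
      (if i ≠ j ∧ j ≠ k ∧ i ≠ k then c else 0)
      = c * (n : ℝ) * ((n : ℝ) - 1) * ((n : ℝ) - 2) := by
  have inner : ∀ i k : Fin n, i ≠ k →
      ∑ j : Fin n, (if i ≠ j ∧ j ≠ k ∧ i ≠ k then c else 0) = ((n : ℝ) - 2) * c := by
    intro i k hik
    have hcong : ∀ j : Fin n, (if i ≠ j ∧ j ≠ k ∧ i ≠ k then c else 0)
        = (if j ∈ (Finset.univ \ {i, k} : Finset (Fin n)) then c else 0) := by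
      intro j
      by_cases h : i ≠ j ∧ j ≠ k
      · rw [if_pos ⟨h.1, h.2, hik⟩, if_pos (by simp [Finset.mem_sdiff, h.1.symm, h.2])]
      · push_neg at h
        rw [if_neg (by tauto), if_neg (by
          simp only [Finset.mem_sdiff, Finset.mem_univ, true_and, Finset.mem_insert,
            Finset.mem_singleton, not_not]
          by_cases h1 : i = j
          · exact Or.inl h1.symm
          · exact Or.inr (h h1))]
    rw [Finset.sum_congr rfl (fun j _ => hcong j), Finset.sum_ite_mem,
      Finset.univ_inter, Finset.sum_const]
    have hcard : (Finset.univ \ {i, k} : Finset (Fin n)).card = n - 2 := by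
      rw [Finset.card_sdiff_of_subset (Finset.subset_univ _), Finset.card_univ, Fintype.card_fin,
        Finset.card_insert_of_notMem (by simp [hik]), Finset.card_singleton]
    rw [hcard, nsmul_eq_mul]
    have : ((n - 2 : ℕ) : ℝ) = (n : ℝ) - 2 := by
      rw [Nat.cast_sub (by omega)]; norm_num
    rw [this]
  have mid : ∀ i : Fin n,
      ∑ k : Fin n, ∑ j : Fin n, (if i ≠ j ∧ j ≠ k ∧ i ≠ k then c else 0)
        = ((n : ℝ) - 1) * (((n : ℝ) - 2) * c) := by
    intro i
    have hcong : ∀ k : Fin n, ∑ j : Fin n, (if i ≠ j ∧ j ≠ k ∧ i ≠ k then c else 0)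
        = (if k ∈ (Finset.univ \ {i} : Finset (Fin n)) then ((n:ℝ) - 2) * c else 0) := by
      intro k
      by_cases hik : i = k
      · subst hik
        simp only [Finset.mem_sdiff, Finset.mem_univ, Finset.mem_singleton, true_and]
        rw [if_neg (by simp)]
        apply Finset.sum_eq_zero
        intro j _
        rw [if_neg (by tauto)]
      · rw [inner i k hik, if_pos (by simp [Ne.symm hik])]
    rw [Finset.sum_congr rfl (fun k _ => hcong k), Finset.sum_ite_mem,
      Finset.univ_inter, Finset.sum_const]
    have hcard : (Finset.univ \ {i} : Finset (Fin n)).card = n - 1 := by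
      rw [Finset.card_sdiff_of_subset (Finset.subset_univ _), Finset.card_univ, Fintype.card_fin,
        Finset.card_singleton]
    rw [hcard, nsmul_eq_mul]
    have : ((n - 1 : ℕ) : ℝ) = (n : ℝ) - 1 := by
      rw [Nat.cast_sub (by omega)]; norm_num
    rw [this]
  rw [Finset.sum_congr rfl (fun i _ => mid i), Finset.sum_const, Finset.card_univ,
    Fintype.card_fin, nsmul_eq_mul]
  ring

end Aux

/-- Let `0 < r < 1/4`, `n ≥ 3`, and let `X_1, …, X_n` be i.i.d. uniform points on
the circle `𝕋¹ = ℝ/ℤ = AddCircle 1`.  Let `A(ω)` be the (random) adjacency matrix of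
the random geometric graph `G(X; r)`, i.e. `A(ω)_{ij} = 1` iff `i ≠ j` and
`dist(X_i, X_j) ≤ r`.  Then `E[trace(A³)] = 3r²·n(n−1)(n−2)`; equivalently, the
expected third spectral moment `E[(1/n) trace(A³)]` equals `3r²(n−1)(n−2)`. -/
theorem expected_third_spectral_moment_RGG_one_dim (n : ℕ) (hn : 3 ≤ n) (r : ℝ)
    (hr : 0 < r) (hr' : r < 1 / 4)
    {Ω : Type*} [MeasurableSpace Ω] (P : Measure Ω) [IsProbabilityMeasure P]
    (X : Fin n → Ω → AddCircle (1 : ℝ))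
    (hmeas : ∀ i, Measurable (X i))
    (hindep : iIndepFun X P)
    (hunif : ∀ i, P.map (X i) = (volume : Measure (AddCircle (1 : ℝ))))
    (A : Ω → Matrix (Fin n) (Fin n) ℝ)
    (hA : ∀ ω i j, A ω i j = if i ≠ j ∧ dist (X i ω) (X j ω) ≤ r then 1 else 0) :
    (∫ ω, Matrix.trace (A ω ^ 3) ∂P
        = 3 * r ^ 2 * (n : ℝ) * ((n : ℝ) - 1) * ((n : ℝ) - 2)) ∧
    (∫ ω, (1 / (n : ℝ)) * Matrix.trace (A ω ^ 3) ∂P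
        = 3 * r ^ 2 * ((n : ℝ) - 1) * ((n : ℝ) - 2)) := by
  have hpair : ∀ a b : Fin n,
      MeasurableSet {ω | a ≠ b ∧ dist (X a ω) (X b ω) ≤ r} := by
    intro a b
    by_cases hab : a = b
    · have : {ω | a ≠ b ∧ dist (X a ω) (X b ω) ≤ r} = ∅ := by ext ω; simp [hab]
      rw [this]; exact MeasurableSet.empty
    · have : {ω | a ≠ b ∧ dist (X a ω) (X b ω) ≤ r}
          = {ω | dist (X a ω) (X b ω) ≤ r} := by ext ω; simp [hab]
      rw [this]
      exact measurableSet_le ((hmeas a).dist (hmeas b)) measurable_const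
  set G : Fin n → Fin n → Fin n → Set Ω := fun i j k =>
    {ω | (i ≠ j ∧ dist (X i ω) (X j ω) ≤ r) ∧ (j ≠ k ∧ dist (X j ω) (X k ω) ≤ r)
      ∧ (k ≠ i ∧ dist (X k ω) (X i ω) ≤ r)} with hGdef
  have hG : ∀ i j k, MeasurableSet (G i j k) := fun i j k =>
    (hpair i j).inter ((hpair j k).inter (hpair k i))
  have hfuneq : ∀ i j k : Fin n,
      (fun ω => A ω i j * A ω j k * A ω k i)
        = (G i j k).indicator (fun _ => (1 : ℝ)) := by
    intro i j k
    funext ω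
    by_cases c1 : i ≠ j ∧ dist (X i ω) (X j ω) ≤ r
    <;> by_cases c2 : j ≠ k ∧ dist (X j ω) (X k ω) ≤ r
    <;> by_cases c3 : k ≠ i ∧ dist (X k ω) (X i ω) ≤ r
    <;> simp [hA, hGdef, Set.indicator_apply, Set.mem_setOf_eq, c1, c2, c3]
  have hint : ∀ i j k : Fin n,
      Integrable (fun ω => A ω i j * A ω j k * A ω k i) P := by
    intro i j k
    rw [hfuneq]
    exact (integrable_const (1 : ℝ)).indicator (hG i j k)
  have hval : ∀ i j k : Fin n, ∫ ω, A ω i j * A ω j k * A ω k i ∂P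
      = (if i ≠ j ∧ j ≠ k ∧ i ≠ k then 3 * r ^ 2 else 0) := by
    intro i j k
    rw [hfuneq, integral_indicator_const (1 : ℝ) (hG i j k)]
    split_ifs with h
    · obtain ⟨hij, hjk, hik⟩ := h
      have hGE : G i j k = {ω | dist (X i ω) (X j ω) ≤ r ∧ dist (X j ω) (X k ω) ≤ r
          ∧ dist (X i ω) (X k ω) ≤ r} := by
        ext ω
        simp only [hGdef, Set.mem_setOf_eq]
        rw [dist_comm (X k ω) (X i ω)]
        constructor
        · rintro ⟨⟨_, h1⟩, ⟨_, h2⟩, ⟨_, h3⟩⟩; exact ⟨h1, h2, h3⟩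
        · rintro ⟨h1, h2, h3⟩; exact ⟨⟨hij, h1⟩, ⟨hjk, h2⟩, ⟨Ne.symm hik, h3⟩⟩
      rw [hGE, measureReal_def, prob_triangle P X hmeas hindep hunif r hr hr' i j k hij hjk hik,
        ENNReal.toReal_ofReal (by positivity), smul_eq_mul, mul_one]
    · have hGempty : G i j k = ∅ := by
        ext ω
        simp only [hGdef, Set.mem_setOf_eq, Set.mem_empty_iff_false, iff_false]
        rintro ⟨⟨h1, _⟩, ⟨h2, _⟩, ⟨h3, _⟩⟩
        exact h ⟨h1, h2, Ne.symm h3⟩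
      rw [hGempty]
      simp
  have hexp : ∀ ω, Matrix.trace (A ω ^ 3)
      = ∑ i, ∑ k, ∑ j, A ω i j * A ω j k * A ω k i := by
    intro ω
    simp [Matrix.trace, Matrix.diag, Matrix.mul_apply, Finset.sum_mul, pow_succ,
      pow_zero, one_mul]
  have key : ∫ ω, Matrix.trace (A ω ^ 3) ∂P
      = 3 * r ^ 2 * (n : ℝ) * ((n : ℝ) - 1) * ((n : ℝ) - 2) := by
    simp only [hexp]
    rw [integral_finset_sum _ (fun i _ => integrable_finset_sum _
      (fun k _ => integrable_finset_sum _ (fun j _ => hint i j k)))]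
    have : ∀ i : Fin n, ∫ ω, ∑ k, ∑ j, A ω i j * A ω j k * A ω k i ∂P
        = ∑ k, ∑ j, (if i ≠ j ∧ j ≠ k ∧ i ≠ k then 3 * r ^ 2 else 0) := by
      intro i
      rw [integral_finset_sum _ (fun k _ => integrable_finset_sum _
        (fun j _ => hint i j k))]
      refine Finset.sum_congr rfl fun k _ => ?_
      rw [integral_finset_sum _ (fun j _ => hint i j k)]
      exact Finset.sum_congr rfl fun j _ => hval i j k
    rw [Finset.sum_congr rfl fun i _ => this i, count_aux n hn (3 * r ^ 2)]
  refine ⟨key, ?_⟩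
  rw [integral_const_mul, key]
  have hn0 : (n : ℝ) ≠ 0 := by
    have : (0 : ℝ) < (n : ℝ) := by exact_mod_cast Nat.lt_of_lt_of_le (by norm_num) hn
    exact ne_of_gt this
  field_simp
end

section
/- For every r > 0, the 4-dimensional Lebesgue measure of the set {(x, y) ∈ ℝ² × ℝ² : ‖x‖ ≤ r, ‖y‖ ≤ r, ‖x − y‖ ≤ r} equals (π − 3√3/4) · π · r⁴, where ‖·‖ denotes the Euclidean norm on ℝ². (This is the expected number of triangles per unit squared density in a two-dimensional random geometric graph: E[t_i] = (π − 3√3/4)π (nr²)².) -/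
open MeasureTheory Real Set Pointwise intervalIntegral

abbrev E2 := EuclideanSpace ℝ (Fin 2)


noncomputable def lens (d : ℝ) : ℝ :=
  π - d * Real.sqrt (1 - d^2/4) - 2 * Real.arcsin (d/2)

lemma vol_sq_le (m : ℝ) :
    volume {t : ℝ | t^2 ≤ m} = ENNReal.ofReal (2 * Real.sqrt m) := by
  rcases le_or_gt 0 m with hm | hm
  · have : {t : ℝ | t^2 ≤ m} = Icc (-Real.sqrt m) (Real.sqrt m) := by
      ext t
      simp only [mem_setOf_eq, mem_Icc]
      constructor
      · intro h
        have h1 : |t| ≤ Real.sqrt m := by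
          rw [← Real.sqrt_sq_eq_abs]
          exact Real.sqrt_le_sqrt h
        exact abs_le.mp h1
      · intro ⟨h1, h2⟩
        have : |t| ≤ Real.sqrt m := abs_le.mpr ⟨h1, h2⟩
        have := sq_le_sq' h1 h2
        nlinarith [Real.sq_sqrt hm]
    rw [this, Real.volume_Icc]
    congr 1
    ring
  · have : {t : ℝ | t^2 ≤ m} = ∅ := by
      ext t; simp only [mem_setOf_eq, mem_empty_iff_false, iff_false]; nlinarith
    rw [this, measure_empty, Real.sqrt_eq_zero_of_nonpos hm.le]
    simp


noncomputable def Fa (s : ℝ) : ℝ := s * Real.sqrt (1 - s^2) + Real.arcsin s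

lemma Fa_deriv {s : ℝ} (h1 : -1 < s) (h2 : s < 1) :
    HasDerivAt Fa (2 * Real.sqrt (1 - s^2)) s := by
  have hq : (0:ℝ) < 1 - s^2 := by nlinarith
  have hs : Real.sqrt (1 - s^2) ≠ 0 := by positivity
  have hsq : Real.sqrt (1 - s^2) ^ 2 = 1 - s^2 := Real.sq_sqrt hq.le
  have hpos : 0 < Real.sqrt (1 - s^2) := Real.sqrt_pos.mpr hq
  have d1 : HasDerivAt (fun x : ℝ => 1 - x^2) (-(2*s)) s := by
    simpa using ((hasDerivAt_pow 2 s).const_sub 1)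
  have d2 : HasDerivAt (fun x : ℝ => Real.sqrt (1 - x^2)) (-(2*s) / (2 * Real.sqrt (1 - s^2))) s :=
    d1.sqrt hq.ne'
  have d3 : HasDerivAt (fun x : ℝ => x * Real.sqrt (1 - x^2))
      (1 * Real.sqrt (1 - s^2) + s * (-(2*s) / (2 * Real.sqrt (1 - s^2)))) s :=
    (hasDerivAt_id s).mul d2
  have d4 : HasDerivAt Real.arcsin (1 / Real.sqrt (1 - s^2)) s :=
    Real.hasDerivAt_arcsin (by linarith) (by linarith)
  have := d3.add d4
  refine this.congr_deriv (Eq.symm ?_)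
  field_simp
  nlinarith [hsq]

lemma integral_two_sqrt (a : ℝ) (ha0 : -1 < a) (ha1 : a ≤ 1) :
    ∫ s in a..1, 2 * Real.sqrt (1 - s^2) = π/2 - Fa a := by
  have hcont : ContinuousOn Fa (Icc a 1) := by
    apply Continuous.continuousOn
    unfold Fa
    exact (continuous_id.mul (by fun_prop)).add Real.continuous_arcsin
  have hint : IntervalIntegrable (fun s => 2 * Real.sqrt (1 - s^2)) volume a 1 := by
    apply Continuous.intervalIntegrable; fun_prop
  have := integral_eq_sub_of_hasDeriv_right_of_le ha1 hcont
    (fun x hx => (Fa_deriv (by linarith [hx.1]) hx.2).hasDerivWithinAt) hint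
  rw [this]
  have : Fa 1 = π/2 := by
    unfold Fa
    simp [Real.arcsin_one]
  rw [this]


lemma lens_area (d : ℝ) (hd0 : 0 ≤ d) (hd1 : d ≤ 1) :
    volume {p : ℝ × ℝ | p.1^2 + p.2^2 ≤ 1 ∧ (p.1 - d)^2 + p.2^2 ≤ 1}
      = ENNReal.ofReal (lens d) := by
  set f : ℝ → ℝ := fun s => 2 * Real.sqrt (1 - max (s^2) ((s-d)^2)) with hf
  have hfc : Continuous f := by fun_prop
  have hT : MeasurableSet {p : ℝ × ℝ | p.1^2 + p.2^2 ≤ 1 ∧ (p.1 - d)^2 + p.2^2 ≤ 1} := by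
    have hc1 : Continuous fun p : ℝ × ℝ => p.1^2 + p.2^2 := by fun_prop
    have hc2 : Continuous fun p : ℝ × ℝ => (p.1 - d)^2 + p.2^2 := by fun_prop
    exact ((isClosed_le hc1 continuous_const).inter
      (isClosed_le hc2 continuous_const)).measurableSet
  rw [Measure.volume_eq_prod, Measure.prod_apply hT]
  have hslice : ∀ s : ℝ, volume (Prod.mk s ⁻¹' {p : ℝ × ℝ | p.1^2 + p.2^2 ≤ 1 ∧ (p.1 - d)^2 + p.2^2 ≤ 1})
      = ENNReal.ofReal (f s) := by
    intro s
    have : Prod.mk s ⁻¹' {p : ℝ × ℝ | p.1^2 + p.2^2 ≤ 1 ∧ (p.1 - d)^2 + p.2^2 ≤ 1}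
        = {t : ℝ | t^2 ≤ 1 - max (s^2) ((s-d)^2)} := by
      ext t
      simp only [mem_preimage, mem_setOf_eq]
      constructor
      · rintro ⟨h1, h2⟩
        rcases max_cases (s^2) ((s-d)^2) with ⟨he, _⟩ | ⟨he, _⟩ <;> rw [he] <;> linarith
      · intro h
        have h1 := le_max_left (s^2) ((s-d)^2)
        have h2 := le_max_right (s^2) ((s-d)^2)
        constructor <;> linarith
    rw [this, vol_sq_le]
  simp_rw [hslice]
  -- support of f
  have hsupp : ∀ s : ℝ, s ∉ Icc (d-1) 1 → f s = 0 := by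
    intro s hs
    simp only [mem_Icc, not_and_or, not_le] at hs
    have : (1:ℝ) - max (s^2) ((s-d)^2) ≤ 0 := by
      rcases hs with hs | hs
      · have h2 := le_max_right (s^2) ((s-d)^2)
        nlinarith
      · have h1 := le_max_left (s^2) ((s-d)^2)
        nlinarith
    simp [hf, Real.sqrt_eq_zero_of_nonpos this]
  have hfi : Integrable f := by
    apply hfc.integrable_of_hasCompactSupport
    exact HasCompactSupport.intro isCompact_Icc hsupp
  have hnn : 0 ≤ f := fun s => by positivity
  rw [← ofReal_integral_eq_lintegral_ofReal hfi (Filter.Eventually.of_forall hnn)]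
  congr 1
  -- compute ∫ f
  rw [← setIntegral_eq_integral_of_forall_compl_eq_zero (fun x hx => hsupp x hx)]
  rw [integral_Icc_eq_integral_Ioc, ← intervalIntegral.integral_of_le (by linarith)]
  have hI1 : IntervalIntegrable f volume (d-1) (d/2) := hfc.intervalIntegrable _ _
  have hI2 : IntervalIntegrable f volume (d/2) 1 := hfc.intervalIntegrable _ _
  rw [← integral_add_adjacent_intervals hI1 hI2]
  have e2 : ∫ s in (d/2)..1, f s = ∫ s in (d/2)..1, 2 * Real.sqrt (1 - s^2) := by
    apply integral_congr
    intro s hs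
    rw [uIcc_of_le (by linarith)] at hs
    have : max (s^2) ((s-d)^2) = s^2 := by
      apply max_eq_left
      nlinarith [hs.1, hs.2]
    simp [hf, this]
  have e1 : ∫ s in (d-1)..(d/2), f s = ∫ s in (d/2)..1, 2 * Real.sqrt (1 - s^2) := by
    have : ∫ s in (d-1)..(d/2), f s = ∫ s in (d-1)..(d/2), (fun u => 2 * Real.sqrt (1 - u^2)) (d - s) := by
      apply integral_congr
      intro s hs
      rw [uIcc_of_le (by linarith)] at hs
      have hm : max (s^2) ((s-d)^2) = (s-d)^2 := by
        apply max_eq_right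
        nlinarith [hs.1, hs.2]
      have : (d - s)^2 = (s - d)^2 := by ring
      simp [hf, hm, this]
    rw [this, intervalIntegral.integral_comp_sub_left (fun u => 2 * Real.sqrt (1 - u^2)) d,
      show d - d/2 = d/2 by ring, show d - (d-1) = 1 by ring]
  rw [e1, e2, integral_two_sqrt (d/2) (by linarith) (by linarith)]
  unfold Fa lens
  have : Real.sqrt (1 - (d/2)^2) = Real.sqrt (1 - d^2/4) := by ring_nf
  rw [this]
  ring



lemma norm_le_iff_E2 (y : E2) (c : ℝ) (hc : 0 ≤ c) :
    ‖y‖ ≤ c ↔ (y 0)^2 + (y 1)^2 ≤ c^2 := by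
  rw [EuclideanSpace.norm_eq]
  rw [Fin.sum_univ_two]
  simp only [Real.norm_eq_abs, sq_abs]
  constructor
  · intro h
    have := Real.sq_sqrt (by positivity : (0:ℝ) ≤ (y 0)^2 + (y 1)^2)
    nlinarith [Real.sqrt_nonneg ((y 0)^2 + (y 1)^2)]
  · intro h
    calc Real.sqrt ((y 0)^2 + (y 1)^2) ≤ Real.sqrt (c^2) := Real.sqrt_le_sqrt h
    _ = c := Real.sqrt_sq hc

-- the two-ball intersection volume in E2, standard position
lemma ball_inter_std (d : ℝ) (hd0 : 0 ≤ d) (hd1 : d ≤ 1) :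
    volume {y : E2 | ‖y‖ ≤ 1 ∧ ‖EuclideanSpace.single (0 : Fin 2) d - y‖ ≤ 1}
      = ENNReal.ofReal (lens d) := by
  have hmp : MeasurePreserving
      ((MeasurableEquiv.toLp 2 (Fin 2 → ℝ)).symm.trans (MeasurableEquiv.finTwoArrow))
      volume volume :=
    (volume_preserving_finTwoArrow ℝ).comp (EuclideanSpace.volume_preserving_symm_measurableEquiv_toLp (Fin 2))
  have hT : MeasurableSet {p : ℝ × ℝ | p.1^2 + p.2^2 ≤ 1 ∧ (p.1 - d)^2 + p.2^2 ≤ 1} := by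
    have hc1 : Continuous fun p : ℝ × ℝ => p.1^2 + p.2^2 := by fun_prop
    have hc2 : Continuous fun p : ℝ × ℝ => (p.1 - d)^2 + p.2^2 := by fun_prop
    exact ((isClosed_le hc1 continuous_const).inter
      (isClosed_le hc2 continuous_const)).measurableSet
  have hpre : ((MeasurableEquiv.toLp 2 (Fin 2 → ℝ)).symm.trans (MeasurableEquiv.finTwoArrow)) ⁻¹'
      {p : ℝ × ℝ | p.1^2 + p.2^2 ≤ 1 ∧ (p.1 - d)^2 + p.2^2 ≤ 1}
      = {y : E2 | ‖y‖ ≤ 1 ∧ ‖EuclideanSpace.single (0 : Fin 2) d - y‖ ≤ 1} := by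
    ext y
    have happ : ((MeasurableEquiv.toLp 2 (Fin 2 → ℝ)).symm.trans (MeasurableEquiv.finTwoArrow)) y
        = (y 0, y 1) := rfl
    simp only [mem_preimage, happ, mem_setOf_eq]
    rw [norm_le_iff_E2 y 1 zero_le_one,
        norm_le_iff_E2 (EuclideanSpace.single (0 : Fin 2) d - y) 1 zero_le_one]
    have h0 : (EuclideanSpace.single (0 : Fin 2) d - y) 0 = d - y 0 := by
      simp [PiLp.sub_apply, EuclideanSpace.single_apply]
    have h1 : (EuclideanSpace.single (0 : Fin 2) d - y) 1 = - y 1 := by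
      simp [PiLp.sub_apply, EuclideanSpace.single_apply]
    rw [h0, h1]
    constructor
    · rintro ⟨a, b⟩
      refine ⟨by linarith, by nlinarith⟩
    · rintro ⟨a, b⟩
      refine ⟨by linarith, by nlinarith⟩
  rw [← hpre] at *
  rw [hmp.measure_preimage hT.nullMeasurableSet]
  exact lens_area d hd0 hd1

lemma ball_inter (x : E2) (hx : ‖x‖ ≤ 1) :
    volume {y : E2 | ‖y‖ ≤ 1 ∧ ‖x - y‖ ≤ 1} = ENNReal.ofReal (lens ‖x‖) := by
  set d := ‖x‖ with hd
  set x₀ : E2 := EuclideanSpace.single (0 : Fin 2) d with hx₀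
  have hnx₀ : ‖x₀‖ = d := by
    rw [hx₀, EuclideanSpace.norm_single]
    exact abs_of_nonneg (norm_nonneg x)
  obtain ⟨e, he⟩ : ∃ e : E2 ≃ₗᵢ[ℝ] E2, e x₀ = x := by
    rcases eq_or_ne x₀ x with h | h
    · exact ⟨LinearIsometryEquiv.refl ℝ E2, h⟩
    · exact ⟨Submodule.reflection ((ℝ ∙ (x₀ - x))ᗮ), Submodule.reflection_sub (by rw [hnx₀])⟩
  have hmeas : MeasurableSet {y : E2 | ‖y‖ ≤ 1 ∧ ‖x - y‖ ≤ 1} := by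
    have hc1 : Continuous fun y : E2 => ‖y‖ := continuous_norm
    have hc2 : Continuous fun y : E2 => ‖x - y‖ := by fun_prop
    exact ((isClosed_le hc1 continuous_const).inter
      (isClosed_le hc2 continuous_const)).measurableSet
  have hpre : (e : E2 → E2) ⁻¹' {y : E2 | ‖y‖ ≤ 1 ∧ ‖x - y‖ ≤ 1}
      = {y : E2 | ‖y‖ ≤ 1 ∧ ‖x₀ - y‖ ≤ 1} := by
    ext y
    simp only [mem_preimage, mem_setOf_eq, e.norm_map]
    constructor
    · rintro ⟨a, b⟩
      refine ⟨a, ?_⟩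
      have : x - e y = e (x₀ - y) := by rw [map_sub, he]
      rw [this, e.norm_map] at b
      exact b
    · rintro ⟨a, b⟩
      refine ⟨a, ?_⟩
      have : x - e y = e (x₀ - y) := by rw [map_sub, he]
      rw [this, e.norm_map]
      exact b
  have := e.measurePreserving.measure_preimage hmeas.nullMeasurableSet
  rw [hpre] at this
  rw [← this]
  exact ball_inter_std d (norm_nonneg x) hx



lemma lens_continuous : Continuous lens := by
  unfold lens
  exact (continuous_const.sub (continuous_id.mul (by fun_prop))).sub
    (continuous_const.mul (Real.continuous_arcsin.comp (by fun_prop)))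

lemma arcsin_half_le {d : ℝ} (hd : d ≤ 1) : Real.arcsin (d/2) ≤ π/6 := by
  have h : Real.arcsin (d/2) ≤ Real.arcsin (1/2) := Real.monotone_arcsin (by linarith)
  have : Real.arcsin (1/2) = π/6 := by
    rw [show (1:ℝ)/2 = Real.sin (π/6) by rw [Real.sin_pi_div_six],
      Real.arcsin_sin (by linarith [Real.pi_pos]) (by linarith [Real.pi_pos])]
  linarith

lemma lens_nonneg {d : ℝ} (hd0 : 0 ≤ d) (hd1 : d ≤ 1) : 0 ≤ lens d := by
  unfold lens
  have h1 : Real.sqrt (1 - d^2/4) ≤ 1 := Real.sqrt_le_one.mpr (by nlinarith)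
  have h2 : d * Real.sqrt (1 - d^2/4) ≤ 1 := by nlinarith [Real.sqrt_nonneg (1 - d^2/4)]
  have h3 := arcsin_half_le hd1
  have := Real.pi_gt_three
  linarith

noncomputable def Hh (y : ℝ) : ℝ :=
  π*y^2/2 + (1-y^2) * Real.arcsin (y/2) - (y/2 + y^3/4) * Real.sqrt (1 - y^2/4)

lemma Hh_deriv {y : ℝ} (h0 : 0 ≤ y) (h1 : y ≤ 1) :
    HasDerivAt Hh (y * lens y) y := by
  have hq : (0:ℝ) < 1 - y^2/4 := by nlinarith
  have hsq : Real.sqrt (1 - y^2/4) ^ 2 = 1 - y^2/4 := Real.sq_sqrt hq.le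
  have hpos : 0 < Real.sqrt (1 - y^2/4) := Real.sqrt_pos.mpr hq
  have harg : (1:ℝ) - (y/2)^2 = 1 - y^2/4 := by ring
  -- derivative of arcsin (y/2)
  have dhalf : HasDerivAt (fun x : ℝ => x/2) (1/2) y := by
    simpa using (hasDerivAt_id y).div_const 2
  have darc : HasDerivAt (fun x : ℝ => Real.arcsin (x/2))
      (1 / Real.sqrt (1 - (y/2)^2) * (1/2)) y :=
    (Real.hasDerivAt_arcsin (by nlinarith) (by nlinarith)).comp y dhalf
  rw [harg] at darc
  -- derivative of sqrt (1 - y^2/4)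
  have dq : HasDerivAt (fun x : ℝ => 1 - x^2/4) (-(y/2)) y := by
    have := ((hasDerivAt_pow 2 y).div_const 4).const_sub 1
    refine this.congr_deriv (Eq.symm ?_)
    ring
  have dsqrt : HasDerivAt (fun x : ℝ => Real.sqrt (1 - x^2/4))
      (-(y/2) / (2 * Real.sqrt (1 - y^2/4))) y := dq.sqrt hq.ne'
  -- assemble
  have d1 : HasDerivAt (fun x : ℝ => π*x^2/2) (π*y) y := by
    have := ((hasDerivAt_pow 2 y).const_mul π).div_const 2
    refine this.congr_deriv (Eq.symm ?_)
    ring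
  have d2 := (((hasDerivAt_pow 2 y).const_sub 1).mul darc)
  have da := (((hasDerivAt_id y).div_const 2).add ((hasDerivAt_pow 3 y).div_const 4))
  have d3 := da.mul dsqrt
  have dtot := (d1.add d2).sub d3
  refine dtot.congr_deriv (Eq.symm ?_)
  unfold lens
  set q := Real.sqrt (1 - y^2/4) with hqdef
  push_cast
  field_simp
  have hA : (((fun x : ℝ => id x / 2) + fun x : ℝ => x ^ 3 / 4 : ℝ → ℝ) y : ℝ) = y/2 + y^3/4 := rfl
  linear_combination (8 - 4 * y^2) * hsq - 4 * y * hA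

lemma integral_y_lens : ∫ y in (0:ℝ)..1, y * lens y = π/2 - 3 * Real.sqrt 3 / 8 := by
  have hderiv : ∀ y ∈ uIcc (0:ℝ) 1, HasDerivAt Hh (y * lens y) y := by
    intro y hy
    rw [uIcc_of_le zero_le_one] at hy
    exact Hh_deriv hy.1 hy.2
  have hint : IntervalIntegrable (fun y => y * lens y) volume 0 1 :=
    (continuous_id.mul lens_continuous).intervalIntegrable _ _
  rw [integral_eq_sub_of_hasDerivAt hderiv hint]
  have e1 : ((Real.sqrt 3)/2)^2 = 3/4 := by
    rw [div_pow, Real.sq_sqrt (by norm_num : (0:ℝ) ≤ 3)]; norm_num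
  have h34 : Real.sqrt ((1:ℝ) - 1^2/4) = Real.sqrt 3 / 2 := by
    rw [show (1:ℝ) - 1^2/4 = ((Real.sqrt 3)/2)^2 by rw [e1]; norm_num,
      Real.sqrt_sq (by positivity)]
  unfold Hh
  rw [h34]
  norm_num [Real.arcsin_zero]
  ring



noncomputable def g (t : ℝ) : ℝ := if t ≤ 1 then lens t else 0

lemma vol1 :
    volume {p : E2 × E2 | ‖p.1‖ ≤ 1 ∧ ‖p.2‖ ≤ 1 ∧ ‖p.1 - p.2‖ ≤ 1}
      = ENNReal.ofReal ((π - 3 * Real.sqrt 3 / 4) * π) := by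
  have hS : MeasurableSet {p : E2 × E2 | ‖p.1‖ ≤ 1 ∧ ‖p.2‖ ≤ 1 ∧ ‖p.1 - p.2‖ ≤ 1} := by
    have hc1 : Continuous fun p : E2 × E2 => ‖p.1‖ := by fun_prop
    have hc2 : Continuous fun p : E2 × E2 => ‖p.2‖ := by fun_prop
    have hc3 : Continuous fun p : E2 × E2 => ‖p.1 - p.2‖ := by fun_prop
    exact ((isClosed_le hc1 continuous_const).inter
      ((isClosed_le hc2 continuous_const).inter
        (isClosed_le hc3 continuous_const))).measurableSet
  rw [Measure.volume_eq_prod, Measure.prod_apply hS]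
  have hslice : ∀ x : E2,
      volume (Prod.mk x ⁻¹' {p : E2 × E2 | ‖p.1‖ ≤ 1 ∧ ‖p.2‖ ≤ 1 ∧ ‖p.1 - p.2‖ ≤ 1})
        = ENNReal.ofReal (g ‖x‖) := by
    intro x
    by_cases hx : ‖x‖ ≤ 1
    · have : Prod.mk x ⁻¹' {p : E2 × E2 | ‖p.1‖ ≤ 1 ∧ ‖p.2‖ ≤ 1 ∧ ‖p.1 - p.2‖ ≤ 1}
          = {y : E2 | ‖y‖ ≤ 1 ∧ ‖x - y‖ ≤ 1} := by
        ext y; simp [hx, and_assoc]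
      rw [this, ball_inter x hx]
      unfold g
      rw [if_pos hx]
    · have : Prod.mk x ⁻¹' {p : E2 × E2 | ‖p.1‖ ≤ 1 ∧ ‖p.2‖ ≤ 1 ∧ ‖p.1 - p.2‖ ≤ 1} = ∅ := by
        ext y; simp [hx]
      rw [this]
      unfold g
      rw [if_neg hx]
      simp
  simp_rw [hslice]
  -- convert to Bochner integral
  have hgnn : ∀ x : E2, 0 ≤ g ‖x‖ := by
    intro x
    unfold g
    split
    · exact lens_nonneg (norm_nonneg x) (by assumption)
    · exact le_refl 0
  have hgeq : (fun x : E2 => g ‖x‖)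
      = (Metric.closedBall (0:E2) 1).indicator (fun z => lens ‖z‖) := by
    classical
    funext x
    unfold g
    rw [Set.indicator_apply]
    simp [Metric.mem_closedBall, dist_zero_right]
  have hint : Integrable (fun x : E2 => g ‖x‖) := by
    rw [hgeq]
    exact (ContinuousOn.integrableOn_compact (isCompact_closedBall _ _)
      ((lens_continuous.comp continuous_norm).continuousOn)).integrable_indicator
      measurableSet_closedBall
  rw [← ofReal_integral_eq_lintegral_ofReal hint (Filter.Eventually.of_forall hgnn)]
  congr 1
  rw [integral_fun_norm_addHaar volume g, finrank_euclideanSpace_fin]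
  have hball : ((volume : Measure E2) (Metric.ball 0 1)).toReal = π := by
    rw [EuclideanSpace.volume_ball, Fintype.card_fin]
    rw [show ((2:ℕ):ℝ)/2 + 1 = 2 by norm_num, Real.Gamma_two]
    rw [Real.sq_sqrt pi_pos.le]
    simp [ENNReal.toReal_ofReal pi_pos.le]
  have hcontl : ContinuousOn (fun y : ℝ => y * lens y) (Icc (0:ℝ) 1) :=
    (continuous_id.mul lens_continuous).continuousOn
  have heq1 : EqOn (fun y : ℝ => y ^ (2-1) • g y) (fun y => y * lens y) (Ioc (0:ℝ) 1) := by
    intro y hy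
    simp only [Nat.sub_self, pow_one, smul_eq_mul, g, show (2-1:ℕ)=1 from rfl]
    rw [if_pos hy.2]
  have hzero : EqOn (fun y : ℝ => y ^ (2-1) • g y) (fun _ => (0:ℝ)) (Ioi (1:ℝ)) := by
    intro y hy
    simp only [g, smul_eq_mul, show (2-1:ℕ)=1 from rfl, pow_one]
    rw [if_neg (not_le.mpr hy)]
    simp
  have hint1 : IntegrableOn (fun y : ℝ => y ^ (2-1) • g y) (Ioc (0:ℝ) 1) := by
    apply IntegrableOn.congr_fun ?_ heq1.symm measurableSet_Ioc
    exact (ContinuousOn.integrableOn_compact isCompact_Icc hcontl).mono_set Ioc_subset_Icc_self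
  have hint2 : IntegrableOn (fun y : ℝ => y ^ (2-1) • g y) (Ioi (1:ℝ)) := by
    apply IntegrableOn.congr_fun (integrableOn_zero) hzero.symm measurableSet_Ioi
  have hIoi : ∫ y in Ioi (0:ℝ), y ^ (2-1) • g y = π/2 - 3 * Real.sqrt 3 / 8 := by
    rw [show Ioi (0:ℝ) = Ioc (0:ℝ) 1 ∪ Ioi (1:ℝ) from (Ioc_union_Ioi_eq_Ioi zero_le_one).symm]
    rw [setIntegral_union (Ioc_disjoint_Ioi le_rfl) measurableSet_Ioi hint1 hint2]
    rw [setIntegral_congr_fun measurableSet_Ioi hzero]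
    rw [setIntegral_congr_fun measurableSet_Ioc heq1]
    rw [← intervalIntegral.integral_of_le zero_le_one]
    simp [integral_y_lens]
  rw [measureReal_def, hball, hIoi]
  simp only [nsmul_eq_mul, smul_eq_mul]
  push_cast
  ring



instance : (volume : Measure (E2 × E2)).IsAddHaarMeasure := by
  rw [Measure.volume_eq_prod]
  exact Measure.prod.instIsAddHaarMeasure volume volume

/-- For every `r > 0`, the 4-dimensional Lebesgue measure of
`{(x, y) ∈ ℝ² × ℝ² : ‖x‖ ≤ r, ‖y‖ ≤ r, ‖x − y‖ ≤ r}` (Euclidean norm on `ℝ²`)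
equals `(π − 3√3/4) · π · r⁴`. -/
theorem volume_triangle_region_two_dim (r : ℝ) (hr : 0 < r) :
    volume {p : EuclideanSpace ℝ (Fin 2) × EuclideanSpace ℝ (Fin 2) |
        ‖p.1‖ ≤ r ∧ ‖p.2‖ ≤ r ∧ ‖p.1 - p.2‖ ≤ r}
      = ENNReal.ofReal ((Real.pi - 3 * Real.sqrt 3 / 4) * Real.pi * r ^ 4) := by
  have hset : {p : E2 × E2 | ‖p.1‖ ≤ r ∧ ‖p.2‖ ≤ r ∧ ‖p.1 - p.2‖ ≤ r}
      = (r • ({p : E2 × E2 | ‖p.1‖ ≤ 1 ∧ ‖p.2‖ ≤ 1 ∧ ‖p.1 - p.2‖ ≤ 1} : Set (E2 × E2)) : Set (E2 × E2)) := by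
    ext p
    rw [Set.mem_smul_set_iff_inv_smul_mem₀ hr.ne']
    simp only [Set.mem_setOf_eq, Prod.smul_fst, Prod.smul_snd, norm_smul,
      Real.norm_eq_abs, abs_inv, abs_of_pos hr]
    rw [← smul_sub, norm_smul]
    simp only [Real.norm_eq_abs, abs_inv, abs_of_pos hr]
    rw [inv_mul_le_one₀ hr, inv_mul_le_one₀ hr, inv_mul_le_one₀ hr]
  rw [hset]
  have hdim : Module.finrank ℝ (E2 × E2) = 4 := by
    rw [Module.finrank_prod, finrank_euclideanSpace_fin]
  rw [Measure.addHaar_smul volume r, hdim, vol1, ← ENNReal.ofReal_mul (by positivity)]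
  congr 1
  rw [abs_of_pos (by positivity)]
  ring
end

section
/- Let G be a simple graph on vertex set {1, …, n} with symmetric 0–1 adjacency matrix A, and let λ_max(A) be the largest eigenvalue of A. Let 0 < β ≤ 1 and 0 < δ ≤ 1 satisfy λ_max(A) < δ/β. Let p : ℕ → [0,1]^n be a trajectory of the epidemic dynamics p_i[k+1] = (1 − ∏_{j ∈ N_i} (1 − β p_j[k])) + (1 − δ) p_i[k] for all i and k, where N_i is the set of neighbors of i in G, and assume p_i[k] ∈ [0,1] for all i and k. Then p_i[k] → 0 as k → ∞, for every i. -/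
open Filter Matrix



private lemma weierstrass_ineq {ι : Type*} (s : Finset ι) (f : ι → ℝ)
    (h0 : ∀ j ∈ s, 0 ≤ f j) (h1 : ∀ j ∈ s, f j ≤ 1) :
    1 - ∏ j ∈ s, (1 - f j) ≤ ∑ j ∈ s, f j := by
  classical
  induction s using Finset.cons_induction with
  | empty => simp
  | cons a s ha ih =>
    rw [Finset.prod_cons, Finset.sum_cons]
    have hP0 : 0 ≤ ∏ j ∈ s, (1 - f j) := Finset.prod_nonneg fun j hj => by
      have := h1 j (Finset.mem_cons_of_mem hj); linarith
    have hP1 : ∏ j ∈ s, (1 - f j) ≤ 1 := Finset.prod_le_one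
      (fun j hj => by have := h1 j (Finset.mem_cons_of_mem hj); linarith)
      (fun j hj => by have := h0 j (Finset.mem_cons_of_mem hj); linarith)
    have hih := ih (fun j hj => h0 j (Finset.mem_cons_of_mem hj))
      (fun j hj => h1 j (Finset.mem_cons_of_mem hj))
    have hfa0 := h0 a (Finset.mem_cons_self a s)
    have hfa1 := h1 a (Finset.mem_cons_self a s)
    nlinarith

private lemma unitary_dot {m : ℕ} {U : Matrix (Fin m) (Fin m) ℝ}
    (hU : Uᵀ * U = 1) (z : Fin m → ℝ) :
    (U *ᵥ z) ⬝ᵥ (U *ᵥ z) = z ⬝ᵥ z := by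
  rw [dotProduct_mulVec, vecMul_mulVec, hU, vecMul_one]

private lemma conj_diag_mulVec {m : ℕ} (U : Matrix (Fin m) (Fin m) ℝ) (μ : Fin m → ℝ)
    (x : Fin m → ℝ) :
    (U * diagonal μ * Uᵀ) *ᵥ x = U *ᵥ (fun i => μ i * (Uᵀ *ᵥ x) i) := by
  have h : diagonal μ *ᵥ (Uᵀ *ᵥ x) = fun i => μ i * (Uᵀ *ᵥ x) i := by
    ext i; rw [mulVec_diagonal]
  rw [← mulVec_mulVec, ← mulVec_mulVec, h]

private lemma dot_transpose_eq {m : ℕ} {U : Matrix (Fin m) (Fin m) ℝ}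
    (hU' : U * Uᵀ = 1) (x : Fin m → ℝ) :
    (Uᵀ *ᵥ x) ⬝ᵥ (Uᵀ *ᵥ x) = x ⬝ᵥ x := by
  have h : Uᵀᵀ * Uᵀ = 1 := by rw [transpose_transpose, hU']
  exact unitary_dot h x

private lemma sq_mulVec_le {m : ℕ} {U : Matrix (Fin m) (Fin m) ℝ}
    (hU : Uᵀ * U = 1) (hU' : U * Uᵀ = 1) (μ : Fin m → ℝ) {c : ℝ}
    (hc : ∀ i, |μ i| ≤ c) (x : Fin m → ℝ) :
    ((U * diagonal μ * Uᵀ) *ᵥ x) ⬝ᵥ ((U * diagonal μ * Uᵀ) *ᵥ x) ≤ c ^ 2 * (x ⬝ᵥ x) := by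
  set y := Uᵀ *ᵥ x with hy
  rw [conj_diag_mulVec, unitary_dot hU]
  have hyy : y ⬝ᵥ y = x ⬝ᵥ x := dot_transpose_eq hU' x
  have h1 : (fun i => μ i * y i) ⬝ᵥ (fun i => μ i * y i) ≤ ∑ i, c ^ 2 * (y i * y i) := by
    refine Finset.sum_le_sum fun i _ => ?_
    dsimp only
    have habs := abs_le.mp (hc i)
    have h1 : μ i ^ 2 ≤ c ^ 2 := sq_le_sq' habs.1 habs.2
    have h2 := mul_le_mul_of_nonneg_right h1 (mul_self_nonneg (y i))
    nlinarith [h2]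
  have h2 : ∑ i, c ^ 2 * (y i * y i) = c ^ 2 * (x ⬝ᵥ x) := by
    rw [← hyy, ← Finset.mul_sum]; rfl
  linarith

private lemma rayleigh_le {m : ℕ} {U : Matrix (Fin m) (Fin m) ℝ}
    (hU : Uᵀ * U = 1) (hU' : U * Uᵀ = 1) (μ : Fin m → ℝ) {c : ℝ}
    (hc : ∀ i, μ i ≤ c) (x : Fin m → ℝ) :
    x ⬝ᵥ ((U * diagonal μ * Uᵀ) *ᵥ x) ≤ c * (x ⬝ᵥ x) := by
  rw [conj_diag_mulVec]
  set y := Uᵀ *ᵥ x with hy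
  have hyy : y ⬝ᵥ y = x ⬝ᵥ x := dot_transpose_eq hU' x
  have h0 : x ⬝ᵥ (U *ᵥ fun i => μ i * y i) = y ⬝ᵥ (fun i => μ i * y i) := by
    rw [dotProduct_mulVec]
    congr 1
    rw [← transpose_transpose U, vecMul_transpose]
  rw [h0]
  have h1 : y ⬝ᵥ (fun i => μ i * y i) ≤ ∑ i, c * (y i * y i) := by
    refine Finset.sum_le_sum fun i _ => ?_
    dsimp only
    have hyi := mul_self_nonneg (y i)
    have := hc i
    nlinarith
  have h2 : ∑ i, c * (y i * y i) = c * (x ⬝ᵥ x) := by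
    rw [← hyy, ← Finset.mul_sum]; rfl
  linarith

private lemma spectrum_subset_range {m : ℕ} {A : Matrix (Fin m) (Fin m) ℝ}
    (hA : A.IsHermitian) : spectrum ℝ A ⊆ Set.range hA.eigenvalues := by
  intro ν hν
  by_contra h
  rw [Set.mem_range] at h
  push_neg at h
  rw [spectrum.mem_iff] at hν
  apply hν
  rw [Matrix.isUnit_iff_isUnit_det]
  set U : Matrix (Fin m) (Fin m) ℝ := (hA.eigenvectorUnitary : Matrix (Fin m) (Fin m) ℝ) with hUdef
  have hU' : U * star U = 1 := Matrix.mem_unitaryGroup_iff.mp hA.eigenvectorUnitary.2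
  have hspec : A = U * diagonal (RCLike.ofReal ∘ hA.eigenvalues) * star U :=
    hA.spectral_theorem
  have key : algebraMap ℝ (Matrix (Fin m) (Fin m) ℝ) ν - A
      = U * diagonal (fun i => ν - hA.eigenvalues i) * star U := by
    have h1 : diagonal (fun _ : Fin m => ν) - diagonal (RCLike.ofReal ∘ hA.eigenvalues)
        = diagonal (fun i => ν - hA.eigenvalues i) := by
      rw [diagonal_sub]; rfl
    have h2 : algebraMap ℝ (Matrix (Fin m) (Fin m) ℝ) ν
        = U * diagonal (fun _ : Fin m => ν) * star U := by
      rw [Matrix.algebraMap_eq_diagonal]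
      have : (algebraMap ℝ (Fin m → ℝ)) ν = fun _ : Fin m => ν := rfl
      rw [this]
      have hd : diagonal (fun _ : Fin m => ν) = ν • (1 : Matrix (Fin m) (Fin m) ℝ) := by
        ext a b
        by_cases hab : a = b <;>
          simp [Matrix.diagonal_apply, Matrix.one_apply, hab]
      rw [hd, Matrix.mul_smul, Matrix.smul_mul, Matrix.mul_one, hU']
    rw [h2, ← h1, Matrix.mul_sub, Matrix.sub_mul, ← hspec]
  rw [key, det_mul, det_mul]
  have hdetU : U.det * (star U).det = 1 := by
    rw [← det_mul, hU', det_one]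
  have hdiag : (diagonal (fun i => ν - hA.eigenvalues i)).det ≠ 0 := by
    rw [det_diagonal]
    exact Finset.prod_ne_zero_iff.mpr fun i _ => sub_ne_zero.mpr fun hc => h i hc.symm
  apply isUnit_iff_ne_zero.mpr
  intro hzero
  apply hdiag
  by_contra hd
  have h0 : U.det * (diagonal (fun i => ν - hA.eigenvalues i)).det * (star U).det ≠ 0 := by
    intro hc
    rcases mul_eq_zero.mp hc with hc1 | hc2
    · rcases mul_eq_zero.mp hc1 with hc3 | hc4
      · rw [hc3, zero_mul] at hdetU; exact zero_ne_one hdetU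
      · exact hd hc4
    · rw [hc2, mul_zero] at hdetU; exact zero_ne_one hdetU
  exact h0 hzero

/-- Let `G` be a simple graph on `{1, …, n}` with 0–1 adjacency matrix
`A = G.adjMatrix ℝ` and largest adjacency eigenvalue
`λ_max(A) = sSup (spectrum ℝ A)`.  Let `0 < β ≤ 1` and `0 < δ ≤ 1` satisfy
`λ_max(A) < δ/β`.  If `p : ℕ → [0,1]^n` is a trajectory of the epidemic dynamics
`p_i[k+1] = (1 − ∏_{j ∈ N_i} (1 − β p_j[k])) + (1 − δ) p_i[k]`, then
`p_i[k] → 0` as `k → ∞` for every node `i`. -/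
theorem epidemic_dies_out_of_spectral_condition (n : ℕ) (G : SimpleGraph (Fin n))
    [DecidableRel G.Adj] (β δ : ℝ) (hβ0 : 0 < β) (hβ1 : β ≤ 1)
    (hδ0 : 0 < δ) (hδ1 : δ ≤ 1)
    (hspec : sSup (spectrum ℝ (G.adjMatrix ℝ)) < δ / β)
    (p : ℕ → Fin n → ℝ)
    (hp : ∀ k i, p k i ∈ Set.Icc (0 : ℝ) 1)
    (hdyn : ∀ k i, p (k + 1) i =
      (1 - ∏ j ∈ G.neighborFinset i, (1 - β * p k j)) + (1 - δ) * p k i) :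
    ∀ i, Tendsto (fun k => p k i) atTop (nhds 0) := by
  intro i
  rcases Nat.eq_zero_or_pos n with hn | hn
  · subst hn; exact i.elim0
  classical
  set A : Matrix (Fin n) (Fin n) ℝ := G.adjMatrix ℝ with hAdef
  have hA : A.IsHermitian := by
    show Aᴴ = A
    ext a b
    simp [hAdef, Matrix.conjTranspose_apply, SimpleGraph.adjMatrix_apply, SimpleGraph.adj_comm]
  set U : Matrix (Fin n) (Fin n) ℝ := (hA.eigenvectorUnitary : Matrix (Fin n) (Fin n) ℝ)
    with hUdef
  have hsUT : star U = Uᵀ := by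
    ext a b; simp [Matrix.star_apply]
  have hUT' : U * Uᵀ = 1 := by
    rw [← hsUT]; exact Matrix.mem_unitaryGroup_iff.mp hA.eigenvectorUnitary.2
  have hUT : Uᵀ * U = 1 := by
    rw [← hsUT]; exact Matrix.mem_unitaryGroup_iff'.mp hA.eigenvectorUnitary.2
  set lam : Fin n → ℝ := hA.eigenvalues with hlamdef
  have hspecthm : A = U * diagonal lam * Uᵀ := by
    rw [← hsUT]
    have := hA.spectral_theorem
    rw [Unitary.conjStarAlgAut_apply] at this
    exact this
  set lm : ℝ := sSup (spectrum ℝ A) with hlmdef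
  have hbdd : BddAbove (spectrum ℝ A) :=
    ((Set.finite_range lam).subset (spectrum_subset_range hA)).bddAbove
  have hle : ∀ j, lam j ≤ lm := fun j => le_csSup hbdd (hA.eigenvalues_mem_spectrum_real j)
  have hray : ∀ x : Fin n → ℝ, x ⬝ᵥ (A *ᵥ x) ≤ lm * (x ⬝ᵥ x) := by
    intro x
    rw [hspecthm]
    exact rayleigh_le hUT hUT' lam hle x
  have hAnn : ∀ a b, 0 ≤ A a b := by
    intro a b
    simp only [hAdef, SimpleGraph.adjMatrix_apply]
    split_ifs <;> norm_num
  -- lower bound on eigenvalues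
  have hlow : ∀ j, -lm ≤ lam j := by
    intro j
    set v : Fin n → ℝ := ⇑(hA.eigenvectorBasis j) with hvdef
    have hv : A *ᵥ v = lam j • v := hA.mulVec_eigenvectorBasis j
    have hvv : v ⬝ᵥ v = 1 := by
      have hnorm : ‖hA.eigenvectorBasis j‖ = 1 := hA.eigenvectorBasis.orthonormal.1 j
      have hinner : v ⬝ᵥ v = ‖hA.eigenvectorBasis j‖ ^ 2 := by
        rw [← real_inner_self_eq_norm_sq]
        simp only [dotProduct, PiLp.inner_apply, hvdef, RCLike.inner_apply, conj_trivial]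
      rw [hinner, hnorm, one_pow]
    have hvAv : v ⬝ᵥ (A *ᵥ v) = lam j := by
      rw [hv, dotProduct_smul, smul_eq_mul, hvv, mul_one]
    set w : Fin n → ℝ := fun a => |v a| with hwdef
    have hww : w ⬝ᵥ w = 1 := by
      rw [← hvv]
      simp [dotProduct, hwdef, abs_mul_abs_self]
    have habs : |v ⬝ᵥ (A *ᵥ v)| ≤ w ⬝ᵥ (A *ᵥ w) := by
      have hdd : v ⬝ᵥ (A *ᵥ v) = ∑ a, v a * (A *ᵥ v) a := rfl
      calc |v ⬝ᵥ (A *ᵥ v)| ≤ ∑ a, |v a * (A *ᵥ v) a| := by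
            rw [hdd]; exact Finset.abs_sum_le_sum_abs _ _
        _ ≤ ∑ a, w a * (A *ᵥ w) a := by
            refine Finset.sum_le_sum fun a _ => ?_
            rw [abs_mul]
            refine mul_le_mul_of_nonneg_left ?_ (abs_nonneg _)
            have hAva : (A *ᵥ v) a = ∑ b, A a b * v b := rfl
            calc |(A *ᵥ v) a| ≤ ∑ b, |A a b * v b| := by
                  rw [hAva]; exact Finset.abs_sum_le_sum_abs _ _
              _ = ∑ b, A a b * w b := by
                  refine Finset.sum_congr rfl fun b _ => ?_
                  rw [abs_mul, abs_of_nonneg (hAnn a b)]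
              _ = (A *ᵥ w) a := rfl
        _ = w ⬝ᵥ (A *ᵥ w) := rfl
    have h2 : w ⬝ᵥ (A *ᵥ w) ≤ lm := by
      have := hray w
      rw [hww, mul_one] at this
      exact this
    have h3 : |lam j| ≤ lm := by rw [← hvAv]; exact le_trans habs h2
    have := abs_le.mp h3
    linarith [this.1]
  have hi0 : (0 : ℝ) ≤ lm := by
    have h1 := hle ⟨0, hn⟩
    have h2 := hlow ⟨0, hn⟩
    linarith
  have hbetalm : β * lm < δ := by
    have := (lt_div_iff₀ hβ0).mp hspec
    linarith [this]
  set r : ℝ := β * lm + (1 - δ) with hrdef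
  have hr1 : r < 1 := by rw [hrdef]; linarith
  have hr0 : 0 ≤ r := by
    have := mul_nonneg hβ0.le hi0
    rw [hrdef]; linarith
  set μ : Fin n → ℝ := fun j => β * lam j + (1 - δ) with hμdef
  have hμr : ∀ j, |μ j| ≤ r := by
    intro j
    have h1 := mul_le_mul_of_nonneg_left (hle j) hβ0.le
    have h2 := mul_le_mul_of_nonneg_left (hlow j) hβ0.le
    rw [abs_le]
    constructor
    · simp only [hμdef, hrdef]; nlinarith
    · simp only [hμdef, hrdef]; nlinarith
  set M : Matrix (Fin n) (Fin n) ℝ := β • A + (1 - δ) • 1 with hMdef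
  have hdiagμ : diagonal μ = β • diagonal lam + (1 - δ) • (1 : Matrix (Fin n) (Fin n) ℝ) := by
    ext a b
    by_cases hab : a = b <;>
      simp [Matrix.diagonal_apply, Matrix.one_apply, hab, hμdef]
  have hMdecomp : M = U * diagonal μ * Uᵀ := by
    rw [hdiagμ, Matrix.mul_add, Matrix.add_mul, hMdef]
    congr 1
    · rw [Matrix.mul_smul, Matrix.smul_mul, ← hspecthm]
    · rw [Matrix.mul_smul, Matrix.smul_mul, Matrix.mul_one, hUT']
  have hub : ∀ k a, p (k + 1) a ≤ (M *ᵥ p k) a := by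
    intro k a
    have hM : (M *ᵥ p k) a = β * ((A *ᵥ p k) a) + (1 - δ) * p k a := by
      rw [hMdef, add_mulVec, smul_mulVec, smul_mulVec, one_mulVec]
      simp [smul_eq_mul]
    have hAv : (A *ᵥ p k) a = ∑ j ∈ G.neighborFinset a, p k j := by
      rw [hAdef]
      exact SimpleGraph.adjMatrix_mulVec_apply _ _ _
    have key := weierstrass_ineq (G.neighborFinset a) (fun j => β * p k j)
      (fun j _ => mul_nonneg hβ0.le (hp k j).1)
      (fun j _ => mul_le_one₀ hβ1 (hp k j).1 (hp k j).2)
    rw [hdyn k a, hM, hAv, Finset.mul_sum]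
    linarith
  set V : ℕ → ℝ := fun k => (p k) ⬝ᵥ (p k) with hVdef
  have hVstep : ∀ k, V (k + 1) ≤ r ^ 2 * V k := by
    intro k
    have h1 : V (k + 1) ≤ (M *ᵥ p k) ⬝ᵥ (M *ᵥ p k) :=
      Finset.sum_le_sum fun a _ => mul_self_le_mul_self (hp (k + 1) a).1 (hub k a)
    have h2 : (M *ᵥ p k) ⬝ᵥ (M *ᵥ p k) ≤ r ^ 2 * V k := by
      rw [hMdecomp]
      exact sq_mulVec_le hUT hUT' μ hμr (p k)
    linarith
  have hVk : ∀ k, V k ≤ (r ^ 2) ^ k * V 0 := by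
    intro k
    induction k with
    | zero => simp
    | succ k ih =>
      calc V (k + 1) ≤ r ^ 2 * V k := hVstep k
        _ ≤ r ^ 2 * ((r ^ 2) ^ k * V 0) := mul_le_mul_of_nonneg_left ih (sq_nonneg r)
        _ = (r ^ 2) ^ (k + 1) * V 0 := by ring
  have hpi : ∀ k, p k i * p k i ≤ (r ^ 2) ^ k * V 0 := by
    intro k
    have h1 : p k i * p k i ≤ V k := by
      rw [hVdef]
      exact Finset.single_le_sum (f := fun a => p k a * p k a)
        (fun a _ => mul_self_nonneg _) (Finset.mem_univ i)
    exact le_trans h1 (hVk k)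
  have hr2 : r ^ 2 < 1 := by nlinarith
  have htends : Tendsto (fun k => (r ^ 2) ^ k * V 0) atTop (nhds 0) := by
    have h := tendsto_pow_atTop_nhds_zero_of_lt_one (sq_nonneg r) hr2
    have := h.mul_const (V 0)
    simpa using this
  have hsq : Tendsto (fun k => p k i * p k i) atTop (nhds 0) :=
    squeeze_zero (fun k => mul_self_nonneg _) hpi htends
  have h2 : Tendsto (fun k => Real.sqrt (p k i * p k i)) atTop (nhds (Real.sqrt 0)) :=
    (Real.continuous_sqrt.tendsto 0).comp hsq
  have heq : (fun k => Real.sqrt (p k i * p k i)) = fun k => p k i := by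
    funext k
    rw [Real.sqrt_mul_self (hp k i).1]
  rw [heq] at h2
  simpa using h2
end
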